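/- arXiv:1910.12103 — 6 statements merged into one kernel-verified Lean document; each statement's English description precedes it below -/
import Mathlib

section
/- If A is a finitely presented group and every quotient group of A is finitely presented, then A is Hopfian, i.e., every surjective group homomorphism A → A is injective. -/
/-- A group is finitely presented if it is the quotient of a finitely generated free group
by the normal closure of a finite set. -/
def Group.IsFinitelyPresented' (A : Type*) [Group A] : Prop :=
  ∃ (n : ℕ) (π : FreeGroup (Fin n) →* A), Function.Surjective π ∧
    ∃ s : Finset (FreeGroup (Fin n)), Subgroup.normalClosure ↑s = π.ker

private def iterHom {A : Type*} [Group A] (φ : A →* A) : ℕ → (A →* A)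
  | 0 => MonoidHom.id A
  | (m+1) => φ.comp (iterHom φ m)

private lemma iterHom_succ_apply {A : Type*} [Group A] (φ : A →* A) (m : ℕ) (a : A) :
    iterHom φ (m+1) a = φ (iterHom φ m a) := rfl

private lemma iterHom_surjective {A : Type*} [Group A] (φ : A →* A)
    (hφ : Function.Surjective φ) : ∀ m, Function.Surjective (iterHom φ m)
  | 0 => Function.surjective_id
  | (m+1) => hφ.comp (iterHom_surjective φ hφ m)

theorem hopfian_of_all_quotients_fp
    {A : Type*} [Group A]
    (hAfp : Group.IsFinitelyPresented' A)
    (hquot : ∀ (N : Subgroup A) [N.Normal], Group.IsFinitelyPresented' (A ⧸ N)) :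
    ∀ φ : A →* A, Function.Surjective φ → Function.Injective φ := by
  classical
  obtain ⟨n, π, hπ, S, hS⟩ := hAfp
  intro φ hφ
  set K : ℕ → Subgroup A := fun m => (iterHom φ m).ker with hK
  have hmono : Monotone K := by
    apply monotone_nat_of_le_succ
    intro m a ha
    have : iterHom φ (m+1) a = φ (iterHom φ m a) := rfl
    simp only [hK, MonoidHom.mem_ker] at ha ⊢
    rw [this, ha, map_one]
  have hdir : Directed (· ≤ ·) K := hmono.directed_le
  set Kc : Subgroup A := ⨆ m, K m with hKc
  have hKcnormal : Kc.Normal := by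
    constructor
    intro a ha g
    rw [hKc, Subgroup.mem_iSup_of_directed hdir] at ha ⊢
    obtain ⟨m, hm⟩ := ha
    exact ⟨m, (iterHom φ m).normal_ker.conj_mem a hm g⟩
  obtain ⟨m', ρ, hρ, T, hT⟩ := hquot Kc
  set q : A →* A ⧸ Kc := QuotientGroup.mk' Kc with hq
  have hqsurj : Function.Surjective q := QuotientGroup.mk'_surjective Kc
  have hqπ : Function.Surjective (q.comp π) := hqsurj.comp hπ
  -- lifts
  set α : FreeGroup (Fin m') →* FreeGroup (Fin n) :=
    FreeGroup.lift fun i => Classical.choose (hqπ (ρ (FreeGroup.of i))) with hαdef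
  have hα : ∀ i, (q.comp π) (α (FreeGroup.of i)) = ρ (FreeGroup.of i) := by
    intro i
    rw [hαdef, FreeGroup.lift_apply_of]
    exact Classical.choose_spec (hqπ (ρ (FreeGroup.of i)))
  have hαρ : (q.comp π).comp α = ρ := FreeGroup.ext_hom _ _ (by simpa using hα)
  set β : FreeGroup (Fin n) →* FreeGroup (Fin m') :=
    FreeGroup.lift fun j => Classical.choose (hρ ((q.comp π) (FreeGroup.of j))) with hβdef
  have hβ : ∀ j, ρ (β (FreeGroup.of j)) = (q.comp π) (FreeGroup.of j) := by
    intro j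
    rw [hβdef, FreeGroup.lift_apply_of]
    exact Classical.choose_spec (hρ ((q.comp π) (FreeGroup.of j)))
  have hβρ : ρ.comp β = q.comp π := FreeGroup.ext_hom _ _ (by simpa using hβ)
  -- the finite normally-generating set
  set X : Set (FreeGroup (Fin n)) :=
    ↑S ∪ α '' ↑T ∪ Set.range (fun j : Fin n =>
      (FreeGroup.of j)⁻¹ * α (β (FreeGroup.of j))) with hXdef
  have hXfin : X.Finite := by
    apply Set.Finite.union
    · exact (S.finite_toSet).union ((T.finite_toSet).image α)
    · exact Set.finite_range _
  set M : Subgroup (FreeGroup (Fin n)) := Subgroup.normalClosure X with hMdef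
  have hXM : X ⊆ ↑M := Subgroup.subset_normalClosure
  have hM : M = (q.comp π).ker := by
    apply le_antisymm
    · apply Subgroup.normalClosure_le_normal
      rintro x ((hx | ⟨t, ht, rfl⟩) | ⟨j, rfl⟩)
      · have hx' : x ∈ π.ker := hS ▸ Subgroup.subset_normalClosure hx
        simp only [SetLike.mem_coe, MonoidHom.mem_ker, MonoidHom.comp_apply] at hx' ⊢
        rw [hx', map_one]
      · have ht' : t ∈ ρ.ker := hT ▸ Subgroup.subset_normalClosure ht
        have : (q.comp π) (α t) = ρ t := by rw [← hαρ]; rfl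
        simp only [SetLike.mem_coe, MonoidHom.mem_ker] at ht' ⊢
        rw [this, ht']
      · simp only [SetLike.mem_coe, MonoidHom.mem_ker, map_mul, map_inv]
        have : (q.comp π) (α (β (FreeGroup.of j))) = ρ (β (FreeGroup.of j)) := by
          rw [← hαρ]; rfl
        rw [this, hβ j, inv_mul_cancel]
    · intro w hw
      set p : FreeGroup (Fin n) →* FreeGroup (Fin n) ⧸ M := QuotientGroup.mk' M with hp
      have hkerp : p.ker = M := QuotientGroup.ker_mk' M
      have h1 : p.comp (α.comp β) = p := by
        apply FreeGroup.ext_hom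
        intro j
        have hmem : (FreeGroup.of j)⁻¹ * α (β (FreeGroup.of j)) ∈ M :=
          hXM (Or.inr ⟨j, rfl⟩)
        have : p ((FreeGroup.of j)⁻¹ * α (β (FreeGroup.of j))) = 1 := by
          rw [← MonoidHom.mem_ker, hkerp]; exact hmem
        rw [map_mul, map_inv, inv_mul_eq_one] at this
        simpa using this.symm
      have h2 : β w ∈ ρ.ker := by
        rw [MonoidHom.mem_ker]
        have : ρ (β w) = (q.comp π) w := by rw [← hβρ]; rfl
        rw [this]; exact hw
      have h3 : α (β w) ∈ M := by
        have hT' : Subgroup.normalClosure (↑T : Set (FreeGroup (Fin m'))) ≤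
            Subgroup.comap α M := by
          apply Subgroup.normalClosure_le_normal
          intro t ht
          exact hXM (Or.inl (Or.inr ⟨t, ht, rfl⟩))
        have : β w ∈ Subgroup.comap α M := hT' (hT ▸ h2)
        exact this
      have h4 : p w = p (α (β w)) := by
        have := congrArg (fun f : FreeGroup (Fin n) →* FreeGroup (Fin n) ⧸ M => f w) h1
        simpa using this.symm
      have h5 : p w = 1 := by
        rw [h4, ← MonoidHom.mem_ker, hkerp]; exact h3
      rw [← hkerp, MonoidHom.mem_ker]; exact h5
  -- Kc is normally generated by the finite set π '' X
  have hKcker : (q.comp π).ker = Subgroup.comap π Kc := by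
    rw [← MonoidHom.comap_ker]
    congr 1
    exact QuotientGroup.ker_mk' Kc
  have hKceq : Kc = Subgroup.normalClosure (π '' X) := by
    have h1 : Subgroup.map π M = Kc := by
      rw [hM, hKcker, Subgroup.map_comap_eq_self_of_surjective hπ]
    rw [← h1, hMdef, Subgroup.map_normalClosure X π hπ]
  -- bound the finite set inside some K m0
  have hsub : π '' X ⊆ ↑Kc := hKceq ▸ Subgroup.subset_normalClosure
  have hex : ∀ x ∈ π '' X, ∃ m, x ∈ K m := by
    intro x hx
    have : x ∈ Kc := hsub hx
    rwa [hKc, Subgroup.mem_iSup_of_directed hdir] at this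
  set g : A → ℕ := fun x => if h : ∃ m, x ∈ K m then h.choose else 0 with hg
  set Y : Finset A := (hXfin.image π).toFinset with hY
  set m0 : ℕ := Y.sup g with hm0
  have hbound : π '' X ⊆ ↑(K m0) := by
    intro x hx
    have h1 : ∃ m, x ∈ K m := hex x hx
    have h2 : x ∈ K (g x) := by
      rw [hg]; simp only [dif_pos h1]; exact h1.choose_spec
    have h3 : g x ≤ m0 := Finset.le_sup (by rw [hY, Set.Finite.mem_toFinset]; exact hx)
    exact hmono h3 h2
  have hKcle : Kc ≤ K m0 := by
    rw [hKceq]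
    exact Subgroup.normalClosure_le_normal hbound
  have hstab : K (m0 + 1) ≤ K m0 := le_trans (le_iSup K (m0 + 1)) hKcle
  -- conclude injectivity
  rw [injective_iff_map_eq_one]
  intro a ha
  obtain ⟨b, rfl⟩ := iterHom_surjective φ hφ m0 a
  have hb : b ∈ K (m0 + 1) := by
    rw [hK, MonoidHom.mem_ker, iterHom_succ_apply, ha]
  have : b ∈ K m0 := hstab hb
  rwa [hK, MonoidHom.mem_ker] at this
end

section
/- A finitely presented group A has all of its quotient groups finitely presented if and only if A satisfies the ascending chain condition on normal subgroups. -/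
/-- A group is finitely presented if it is the quotient of a finitely generated free group
by the normal closure of a finite set. -/
def Group.IsFinitelyPresentedFin (A : Type*) [Group A] : Prop :=
  ∃ (n : ℕ) (π : FreeGroup (Fin n) →* A), Function.Surjective π ∧
    ∃ s : Finset (FreeGroup (Fin n)), Subgroup.normalClosure ↑s = π.ker

/-- B.H. Neumann's lemma: if `A` is generated by `n` elements and `A ⧸ N` is finitely
presented, then `N` is the normal closure of a finite set. -/
lemma fng_of_quotient_fp {A : Type*} [Group A] {n : ℕ} (π : FreeGroup (Fin n) →* A)
    (hπ : Function.Surjective π) (N : Subgroup A) [hN : N.Normal]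
    (hfp : Group.IsFinitelyPresentedFin (A ⧸ N)) :
    ∃ T : Set A, T.Finite ∧ Subgroup.normalClosure T = N := by
  obtain ⟨m, ρ, hρ, t, ht⟩ := hfp
  set q : A →* A ⧸ N := QuotientGroup.mk' N with hqdef
  have hq : Function.Surjective q := QuotientGroup.mk'_surjective N
  have hqπ : Function.Surjective (q.comp π) := hq.comp hπ
  choose αg hαg using fun i : Fin n => hρ ((q.comp π) (FreeGroup.of i))
  set α : FreeGroup (Fin n) →* FreeGroup (Fin m) := FreeGroup.lift αg with hα
  choose βg hβg using fun j : Fin m => hqπ (ρ (FreeGroup.of j))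
  set β : FreeGroup (Fin m) →* FreeGroup (Fin n) := FreeGroup.lift βg with hβ
  have hρα : ρ.comp α = q.comp π :=
    FreeGroup.ext_hom _ _ (fun i => by simpa [hα] using hαg i)
  have hqπβ : (q.comp π).comp β = ρ :=
    FreeGroup.ext_hom _ _ (fun j => by simpa [hβ] using hβg j)
  have hρα' : ∀ w, ρ (α w) = q (π w) := fun w => DFunLike.congr_fun hρα w
  have hqπβ' : ∀ w, q (π (β w)) = ρ w := fun w => DFunLike.congr_fun hqπβ w
  set γ : FreeGroup (Fin n) →* FreeGroup (Fin n) := β.comp α with hγ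
  set D : Set (FreeGroup (Fin n)) :=
    Set.range (fun i : Fin n => FreeGroup.of i * (γ (FreeGroup.of i))⁻¹) with hD
  set M : Subgroup (FreeGroup (Fin n)) := Subgroup.normalClosure (D ∪ β '' ↑t) with hM
  have hMn : M.Normal := Subgroup.normalClosure_normal
  have key : ∀ w, w * (γ w)⁻¹ ∈ M := by
    intro w
    induction w using FreeGroup.induction_on with
    | C1 => simpa using M.one_mem
    | of i => exact Subgroup.subset_normalClosure (Or.inl ⟨i, rfl⟩)
    | inv_of i h =>
        replace h : FreeGroup.of i * (γ (FreeGroup.of i))⁻¹ ∈ M := h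
        show (FreeGroup.of i)⁻¹ * (γ ((FreeGroup.of i)⁻¹))⁻¹ ∈ M
        have h2 := M.inv_mem (hMn.conj_mem _ h (FreeGroup.of i)⁻¹)
        have he : ((FreeGroup.of i)⁻¹ * (FreeGroup.of i * (γ (FreeGroup.of i))⁻¹) *
            (FreeGroup.of i)⁻¹⁻¹)⁻¹ = (FreeGroup.of i)⁻¹ * (γ ((FreeGroup.of i)⁻¹))⁻¹ := by
          simp only [map_inv, inv_inv]
          group
        rwa [he] at h2
    | mul x y hx hy =>
        have h2 := M.mul_mem (hMn.conj_mem _ hy x) hx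
        have he : (x * (y * (γ y)⁻¹) * x⁻¹) * (x * (γ x)⁻¹) = x * y * (γ (x * y))⁻¹ := by
          simp only [map_mul, mul_inv_rev]
          group
        rwa [he] at h2
  have hβt : ∀ x ∈ Subgroup.normalClosure (↑t : Set (FreeGroup (Fin m))), β x ∈ M := by
    haveI : (Subgroup.comap β M).Normal := hMn.comap β
    intro x hx
    have hle : Subgroup.normalClosure (↑t : Set (FreeGroup (Fin m))) ≤ Subgroup.comap β M :=
      Subgroup.normalClosure_le_normal
        (fun y hy => Subgroup.subset_normalClosure (Or.inr ⟨y, hy, rfl⟩))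
    exact hle hx
  have hker : (q.comp π).ker = M := by
    apply le_antisymm
    · intro x hx
      have hαx : α x ∈ ρ.ker := by
        rw [MonoidHom.mem_ker, hρα']
        exact hx
      rw [← ht] at hαx
      have h3 : γ x ∈ M := hβt (α x) hαx
      have h1 := M.mul_mem (key x) h3
      simpa using h1
    · apply Subgroup.normalClosure_le_normal
      rintro x (⟨i, rfl⟩ | ⟨w, hw, rfl⟩)
      · have hgi : q (π (γ (FreeGroup.of i))) = q (π (FreeGroup.of i)) := by
          rw [show γ (FreeGroup.of i) = β (α (FreeGroup.of i)) from rfl, hqπβ', hρα']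
        simp [MonoidHom.mem_ker, hgi]
      · have hw' : ρ w = 1 := by
          have h4 : w ∈ Subgroup.normalClosure (↑t : Set (FreeGroup (Fin m))) :=
            Subgroup.subset_normalClosure hw
          rw [ht] at h4
          exact h4
        simp [MonoidHom.mem_ker, hqπβ', hw']
  have hcomap : (q.comp π).ker = Subgroup.comap π N := by
    rw [← MonoidHom.comap_ker, hqdef, QuotientGroup.ker_mk']
  refine ⟨π '' (D ∪ β '' ↑t), ?_, ?_⟩
  · exact ((Set.finite_range _).union ((t.finite_toSet).image β)).image π
  · rw [← Subgroup.map_normalClosure _ π hπ, ← hM, ← hker, hcomap,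
      Subgroup.map_comap_eq_self_of_surjective hπ]
/-- If `A` is finitely presented and `N` is the normal closure of a finite set, then
`A ⧸ N` is finitely presented. -/
lemma quotient_fp_of_fng {A : Type*} [Group A] (hAfp : Group.IsFinitelyPresentedFin A)
    (N : Subgroup A) [hN : N.Normal] (T : Set A) (hT : T.Finite)
    (hTN : Subgroup.normalClosure T = N) : Group.IsFinitelyPresentedFin (A ⧸ N) := by
  classical
  obtain ⟨n, π, hπ, s, hs⟩ := hAfp
  set q : A →* A ⧸ N := QuotientGroup.mk' N with hqdef
  choose lft hlft using fun x : T => hπ (x : A)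
  set T' : Set (FreeGroup (Fin n)) := Set.range lft with hT'
  have hT'fin : T'.Finite := by
    haveI := hT.to_subtype
    exact Set.finite_range lft
  have hfin : ((↑s : Set (FreeGroup (Fin n))) ∪ T').Finite := s.finite_toSet.union hT'fin
  have hπT' : π '' T' = T := by
    ext x
    constructor
    · rintro ⟨y, ⟨z, rfl⟩, rfl⟩
      rw [hlft z]
      exact z.2
    · intro hx
      exact ⟨lft ⟨x, hx⟩, ⟨⟨x, hx⟩, rfl⟩, hlft ⟨x, hx⟩⟩
  refine ⟨n, q.comp π, (QuotientGroup.mk'_surjective N).comp hπ, hfin.toFinset, ?_⟩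
  rw [hfin.coe_toFinset]
  have hcomap : (q.comp π).ker = Subgroup.comap π N := by
    rw [← MonoidHom.comap_ker, hqdef, QuotientGroup.ker_mk']
  rw [hcomap]
  haveI : (Subgroup.comap π N).Normal := hN.comap π
  apply le_antisymm
  · apply Subgroup.normalClosure_le_normal
    rintro x (hx | hx)
    · have : x ∈ π.ker := by
        rw [← hs]
        exact Subgroup.subset_normalClosure hx
      simp only [SetLike.mem_coe, Subgroup.mem_comap]
      rw [MonoidHom.mem_ker] at this
      rw [this]
      exact N.one_mem
    · obtain ⟨z, rfl⟩ := hx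
      simp only [SetLike.mem_coe, Subgroup.mem_comap]
      rw [hlft z, ← hTN]
      exact Subgroup.subset_normalClosure z.2
  · intro x hx
    have hx' : π x ∈ Subgroup.normalClosure (π '' T') := by
      rw [hπT', hTN]
      exact hx
    rw [← Subgroup.map_normalClosure _ π hπ] at hx'
    obtain ⟨y, hy, hxy⟩ := hx'
    have h1 : x * y⁻¹ ∈ π.ker := by
      rw [MonoidHom.mem_ker, map_mul, map_inv, hxy, mul_inv_cancel]
    rw [← hs] at h1
    have h2 : x * y⁻¹ ∈ Subgroup.normalClosure ((↑s : Set (FreeGroup (Fin n))) ∪ T') :=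
      Subgroup.normalClosure_mono Set.subset_union_left h1
    have h3 : y ∈ Subgroup.normalClosure ((↑s : Set (FreeGroup (Fin n))) ∪ T') :=
      Subgroup.normalClosure_mono Set.subset_union_right hy
    have := Subgroup.mul_mem _ h2 h3
    simpa using this

/-- ACC on normal subgroups implies every normal subgroup is the normal closure of a
finite set. -/
lemma fng_of_acc {A : Type*} [Group A]
    (hacc : ∀ c : ℕ → Subgroup A, (∀ n, (c n).Normal) → Monotone c →
        ∃ N, ∀ m, N ≤ m → c m = c N)
    (N : Subgroup A) [hN : N.Normal] :
    ∃ T : Set A, T.Finite ∧ Subgroup.normalClosure T = N := by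
  by_contra h
  push_neg at h
  have step : ∀ T : Set A, T.Finite → T ⊆ ↑N → ∃ x, x ∈ N ∧ x ∉ Subgroup.normalClosure T := by
    intro T hTf hTN
    by_contra hc
    push_neg at hc
    exact h T hTf (le_antisymm (Subgroup.normalClosure_le_normal hTN) hc)
  let F : ℕ → {T : Set A // T.Finite ∧ T ⊆ ↑N} := fun k => Nat.rec
    ⟨∅, Set.finite_empty, Set.empty_subset _⟩
    (fun _ p => ⟨insert (step p.1 p.2.1 p.2.2).choose p.1,
      p.2.1.insert _,
      Set.insert_subset (step p.1 p.2.1 p.2.2).choose_spec.1 p.2.2⟩) k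
  set c : ℕ → Subgroup A := fun k => Subgroup.normalClosure (F k).1 with hc
  have hcn : ∀ k, (c k).Normal := fun k => Subgroup.normalClosure_normal
  have hmono : Monotone c := by
    apply monotone_nat_of_le_succ
    intro k
    exact Subgroup.normalClosure_mono (Set.subset_insert _ _)
  obtain ⟨K, hK⟩ := hacc c hcn hmono
  have hx := (step (F K).1 (F K).2.1 (F K).2.2).choose_spec.2
  apply hx
  have hmemx : (step (F K).1 (F K).2.1 (F K).2.2).choose ∈ c (K + 1) :=
    Subgroup.subset_normalClosure (Set.mem_insert _ _)
  rw [hK (K + 1) (Nat.le_succ K)] at hmemx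
  exact hmemx

theorem all_quotients_fp_iff_acc_on_normal_subgroups
    {A : Type*} [Group A] (hAfp : Group.IsFinitelyPresentedFin A) :
    (∀ (N : Subgroup A) [N.Normal], Group.IsFinitelyPresentedFin (A ⧸ N)) ↔
      (∀ c : ℕ → Subgroup A, (∀ n, (c n).Normal) → Monotone c →
        ∃ N, ∀ m, N ≤ m → c m = c N) := by
  classical
  obtain ⟨n, π, hπ, s, hs⟩ := hAfp
  constructor
  · intro hq c hcn hmono
    set N : Subgroup A := ⨆ k, c k with hNdef
    have hdir : Directed (· ≤ ·) c := hmono.directed_le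
    haveI hNn : N.Normal := by
      constructor
      intro x hx g
      rw [hNdef, Subgroup.mem_iSup_of_directed hdir] at hx ⊢
      obtain ⟨k, hk⟩ := hx
      exact ⟨k, (hcn k).conj_mem x hk g⟩
    obtain ⟨T, hTf, hTN⟩ := fng_of_quotient_fp π hπ N (hq N)
    have hmem : ∀ x ∈ T, ∃ k, x ∈ c k := by
      intro x hx
      have hxN : x ∈ N := hTN ▸ Subgroup.subset_normalClosure hx
      rw [hNdef, Subgroup.mem_iSup_of_directed hdir] at hxN
      exact hxN
    choose! idx hidx using hmem
    set K := hTf.toFinset.sup idx with hKdef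
    have hTsub : T ⊆ ↑(c K) := by
      intro x hx
      exact hmono (Finset.le_sup (hTf.mem_toFinset.2 hx)) (hidx x hx)
    haveI := hcn K
    have hcK : c K = N := le_antisymm (le_iSup c K)
      (hTN ▸ Subgroup.normalClosure_le_normal hTsub)
    refine ⟨K, fun m hm => le_antisymm ?_ (hmono hm)⟩
    rw [hcK]
    exact le_iSup c m
  · intro hacc N hN
    obtain ⟨T, hTf, hTN⟩ := fng_of_acc hacc N
    exact quotient_fp_of_fng ⟨n, π, hπ, s, hs⟩ N T hTf hTN
end

section
/- Let B and C be associative unital K-algebras over a field K. The direct product algebra A = B × C is finitely presented as a K-algebra if and only if both B and C are finitely presented as K-algebras. -/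
/-- A (possibly noncommutative) `K`-algebra is finitely presented if it is the quotient of a
free associative algebra on finitely many generators by a finitely generated two-sided ideal. -/
def Algebra.IsFinitelyPresentedNC (K A : Type*) [CommRing K] [Ring A] [Algebra K A] : Prop :=
  ∃ (n : ℕ) (π : FreeAlgebra K (Fin n) →ₐ[K] A), Function.Surjective π ∧
    ∃ s : Finset (FreeAlgebra K (Fin n)),
      (↑(TwoSidedIdeal.span (↑s : Set (FreeAlgebra K (Fin n)))) : Set (FreeAlgebra K (Fin n)))
        = {x | π x = 0}

lemma my_span_le {R : Type*} [NonUnitalNonAssocRing R] {s : Set R} {I : TwoSidedIdeal R}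
    (h : s ⊆ I) : TwoSidedIdeal.span s ≤ I :=
  fun _ hx => TwoSidedIdeal.mem_span_iff.mp hx I h


lemma fp_of_surj {K A A' : Type*} [CommRing K] [Ring A] [Algebra K A] [Ring A'] [Algebra K A']
    (hA : Algebra.IsFinitelyPresentedNC K A) (g : A →ₐ[K] A') (hg : Function.Surjective g)
    (t : Finset A)
    (hker : (↑(TwoSidedIdeal.span (↑t : Set A)) : Set A) = {a | g a = 0}) :
    Algebra.IsFinitelyPresentedNC K A' := by
  classical
  obtain ⟨n, π, hπ, s, hs⟩ := hA
  -- lifts of t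
  have hu : ∀ a : A, ∃ x : FreeAlgebra K (Fin n), π x = a := hπ
  choose u hu using hu
  refine ⟨n, g.comp π, hg.comp hπ, s ∪ t.image u, ?_⟩
  have hst : ((↑(s ∪ t.image u) : Set (FreeAlgebra K (Fin n)))) = ↑s ∪ u '' ↑t := by
    simp [Finset.coe_union, Finset.coe_image]
  -- the kernel of g ∘ π as a two-sided ideal
  have hKmem : ∀ x : FreeAlgebra K (Fin n), x ∈ TwoSidedIdeal.span (↑s : Set (FreeAlgebra K (Fin n))) ↔ π x = 0 := fun x => by
    rw [← SetLike.mem_coe, hs]; rfl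
  have hTmem : ∀ a : A, a ∈ TwoSidedIdeal.span (↑t : Set A) ↔ g a = 0 := fun a => by
    rw [← SetLike.mem_coe, hker]; rfl
  set Kgp : TwoSidedIdeal (FreeAlgebra K (Fin n)) := TwoSidedIdeal.mk' {x | g (π x) = 0}
    (by simp) (fun hx hy => by simp_all [map_add])
    (fun hx => by simp_all [map_neg])
    (fun {x y} hy => by simp_all [map_mul])
    (fun {x y} hx => by simp_all [map_mul]) with hKgp
  have memKgp : ∀ x : FreeAlgebra K (Fin n), x ∈ Kgp ↔ g (π x) = 0 := fun x => TwoSidedIdeal.mem_mk' _ _ _ _ _ _ x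
  ext x
  simp only [SetLike.mem_coe, Set.mem_setOf_eq, AlgHom.coe_comp, Function.comp_apply]
  constructor
  · intro hx
    have : x ∈ Kgp := by
      refine my_span_le ?_ hx
      rw [hst]
      rintro y (hy | ⟨a, ha, rfl⟩)
      · rw [SetLike.mem_coe, memKgp]
        have : π y = 0 := (hKmem y).mp (TwoSidedIdeal.subset_span hy)
        simp [this]
      · rw [SetLike.mem_coe, memKgp, hu]
        exact (hTmem a).mp (TwoSidedIdeal.subset_span ha)
    exact (memKgp x).mp this
  · intro hx
    -- π x ∈ span t
    have hπx : π x ∈ TwoSidedIdeal.span (↑t : Set A) := (hTmem _).mpr hx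
    -- image ideal
    set P : TwoSidedIdeal A := TwoSidedIdeal.mk'
      {a | ∃ y ∈ TwoSidedIdeal.span ((↑(s ∪ t.image u) : Set (FreeAlgebra K (Fin n)))), π y = a}
      ⟨0, TwoSidedIdeal.zero_mem _, map_zero _⟩
      (fun ⟨y, hy, hy'⟩ ⟨z, hz, hz'⟩ => ⟨y + z, TwoSidedIdeal.add_mem _ hy hz, by simp [hy', hz']⟩)
      (fun ⟨y, hy, hy'⟩ => ⟨-y, TwoSidedIdeal.neg_mem _ hy, by simp [hy']⟩)
      (fun {a b} ⟨y, hy, hy'⟩ => by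
        obtain ⟨z, hz⟩ := hπ a
        exact ⟨z * y, TwoSidedIdeal.mul_mem_left _ _ _ hy, by simp [hz, hy']⟩)
      (fun {a b} ⟨y, hy, hy'⟩ => by
        obtain ⟨z, hz⟩ := hπ b
        exact ⟨y * z, TwoSidedIdeal.mul_mem_right _ _ _ hy, by simp [hz, hy']⟩) with hP
    have memP : ∀ a : A, a ∈ P ↔ _ := fun a => TwoSidedIdeal.mem_mk' _ _ _ _ _ _ a
    have htP : (↑t : Set A) ⊆ P := by
      intro a ha
      rw [SetLike.mem_coe, memP]
      exact ⟨u a, TwoSidedIdeal.subset_span (by rw [hst]; exact Or.inr ⟨a, ha, rfl⟩), hu a⟩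
    obtain ⟨y, hy, hy'⟩ := (memP _).mp (my_span_le htP hπx)
    have hxy : x - y ∈ TwoSidedIdeal.span (↑s : Set (FreeAlgebra K (Fin n))) := (hKmem _).mpr (by simp [hy'])
    rw [show x = (x - y) + y by abel]
    exact TwoSidedIdeal.add_mem _
      (TwoSidedIdeal.span_mono (by rw [hst]; exact Set.subset_union_left) hxy) hy

lemma ker_fst {B C : Type*} [Ring B] [Ring C] :
    (↑(TwoSidedIdeal.span ({((0:B),(1:C))} : Set (B × C))) : Set (B × C)) = {p | p.1 = 0} := by
  set I : TwoSidedIdeal (B × C) := TwoSidedIdeal.mk' {p : B × C | p.1 = 0}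
    (by simp) (fun hx hy => by simp_all [Prod.fst_add])
    (fun hx => by simp_all [Prod.fst_neg])
    (fun {x y} hy => by simp_all [Prod.fst_mul])
    (fun {x y} hx => by simp_all [Prod.fst_mul]) with hI
  have memI : ∀ p : B × C, p ∈ I ↔ p.1 = 0 := fun p => TwoSidedIdeal.mem_mk' _ _ _ _ _ _ p
  ext p
  simp only [SetLike.mem_coe, Set.mem_setOf_eq]
  constructor
  · intro hp
    refine (memI p).mp (my_span_le ?_ hp)
    intro q hq
    rw [Set.mem_singleton_iff] at hq
    rw [SetLike.mem_coe, memI, hq]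
  · intro hp
    have : p = (p.1 + 1, p.2) * ((0 : B), (1 : C)) := by
      ext <;> simp [hp]
    rw [this]
    exact TwoSidedIdeal.mul_mem_left _ _ _ (TwoSidedIdeal.subset_span rfl)


lemma ker_snd {B C : Type*} [Ring B] [Ring C] :
    (↑(TwoSidedIdeal.span ({((1:B),(0:C))} : Set (B × C))) : Set (B × C)) = {p | p.2 = 0} := by
  set I : TwoSidedIdeal (B × C) := TwoSidedIdeal.mk' {p : B × C | p.2 = 0}
    (by simp) (fun hx hy => by simp_all [Prod.snd_add])
    (fun hx => by simp_all [Prod.snd_neg])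
    (fun {x y} hy => by simp_all [Prod.snd_mul])
    (fun {x y} hx => by simp_all [Prod.snd_mul]) with hI
  have memI : ∀ p : B × C, p ∈ I ↔ p.2 = 0 := fun p => TwoSidedIdeal.mem_mk' _ _ _ _ _ _ p
  ext p
  simp only [SetLike.mem_coe, Set.mem_setOf_eq]
  constructor
  · intro hp
    refine (memI p).mp (my_span_le ?_ hp)
    intro q hq
    rw [Set.mem_singleton_iff] at hq
    rw [SetLike.mem_coe, memI, hq]
  · intro hp
    have : p = (p.1, p.2 + 1) * ((1 : B), (0 : C)) := by
      ext <;> simp [hp]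
    rw [this]
    exact TwoSidedIdeal.mul_mem_left _ _ _ (TwoSidedIdeal.subset_span rfl)

lemma span_image_ringEquiv {R S : Type*} [Ring R] [Ring S] (e : R ≃+* S) (s : Set R) :
    (↑(TwoSidedIdeal.span (e '' s)) : Set S) = e '' ↑(TwoSidedIdeal.span s) := by
  set I : TwoSidedIdeal R := TwoSidedIdeal.mk' {x : R | e x ∈ TwoSidedIdeal.span (e '' s)}
    (by simp only [Set.mem_setOf_eq, map_zero]; exact TwoSidedIdeal.zero_mem _)
    (fun hx hy => by simp only [Set.mem_setOf_eq, map_add] at *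
                     exact TwoSidedIdeal.add_mem _ hx hy)
    (fun hx => by simp only [Set.mem_setOf_eq, map_neg] at *
                  exact TwoSidedIdeal.neg_mem _ hx)
    (fun {x y} hy => by simp only [Set.mem_setOf_eq, map_mul] at *
                        exact TwoSidedIdeal.mul_mem_left _ _ _ hy)
    (fun {x y} hx => by simp only [Set.mem_setOf_eq, map_mul] at *
                        exact TwoSidedIdeal.mul_mem_right _ _ _ hx) with hI
  have memI : ∀ x : R, x ∈ I ↔ e x ∈ TwoSidedIdeal.span (e '' s) :=
    fun x => TwoSidedIdeal.mem_mk' _ _ _ _ _ _ x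
  set P : TwoSidedIdeal S := TwoSidedIdeal.mk'
    {y : S | ∃ x ∈ TwoSidedIdeal.span s, e x = y}
    ⟨0, TwoSidedIdeal.zero_mem _, map_zero _⟩
    (fun ⟨x, hx, hx'⟩ ⟨z, hz, hz'⟩ => ⟨x + z, TwoSidedIdeal.add_mem _ hx hz, by simp [hx', hz']⟩)
    (fun ⟨x, hx, hx'⟩ => ⟨-x, TwoSidedIdeal.neg_mem _ hx, by simp [hx']⟩)
    (fun {a b} ⟨x, hx, hx'⟩ =>
      ⟨e.symm a * x, TwoSidedIdeal.mul_mem_left _ _ _ hx, by simp [hx']⟩)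
    (fun {a b} ⟨x, hx, hx'⟩ =>
      ⟨x * e.symm b, TwoSidedIdeal.mul_mem_right _ _ _ hx, by simp [hx']⟩) with hP
  have memP : ∀ y : S, y ∈ P ↔ ∃ x ∈ TwoSidedIdeal.span s, e x = y :=
    fun y => TwoSidedIdeal.mem_mk' _ _ _ _ _ _ y
  ext y
  simp only [SetLike.mem_coe, Set.mem_image]
  constructor
  · intro hy
    have : y ∈ P := by
      refine my_span_le ?_ hy
      rintro _ ⟨x, hx, rfl⟩
      rw [SetLike.mem_coe, memP]
      exact ⟨x, TwoSidedIdeal.subset_span hx, rfl⟩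
    obtain ⟨x, hx, hx'⟩ := (memP y).mp this
    exact ⟨x, hx, hx'⟩
  · rintro ⟨x, hx, rfl⟩
    have : x ∈ I := by
      refine my_span_le ?_ hx
      intro z hz
      rw [SetLike.mem_coe, memI]
      exact TwoSidedIdeal.subset_span ⟨z, hz, rfl⟩
    exact (memI x).mp this


lemma fp_of_fintype_presentation {K A : Type*} [CommRing K] [Ring A] [Algebra K A]
    {σ : Type} [Fintype σ] (π : FreeAlgebra K σ →ₐ[K] A) (hπ : Function.Surjective π)
    (s : Finset (FreeAlgebra K σ))
    (hs : (↑(TwoSidedIdeal.span (↑s : Set (FreeAlgebra K σ))) : Set (FreeAlgebra K σ))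
      = {x | π x = 0}) :
    Algebra.IsFinitelyPresentedNC K A := by
  classical
  set N := Fintype.card σ
  set e := Fintype.equivFin σ
  set φ : FreeAlgebra K (Fin N) →ₐ[K] FreeAlgebra K σ :=
    FreeAlgebra.lift K (fun i => FreeAlgebra.ι K (e.symm i)) with hφ
  set ψ : FreeAlgebra K σ →ₐ[K] FreeAlgebra K (Fin N) :=
    FreeAlgebra.lift K (fun x => FreeAlgebra.ι K (e x)) with hψ
  have hφψ : ∀ x, φ (ψ x) = x := by
    have : φ.comp ψ = AlgHom.id K (FreeAlgebra K σ) := by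
      apply FreeAlgebra.hom_ext
      funext x
      simp [hφ, hψ, FreeAlgebra.lift_ι_apply]
    intro x
    exact DFunLike.congr_fun this x
  have hψφ : ∀ x, ψ (φ x) = x := by
    have : ψ.comp φ = AlgHom.id K (FreeAlgebra K (Fin N)) := by
      apply FreeAlgebra.hom_ext
      funext x
      simp [hφ, hψ, FreeAlgebra.lift_ι_apply]
    intro x
    exact DFunLike.congr_fun this x
  set Ψ : FreeAlgebra K σ ≃+* FreeAlgebra K (Fin N) :=
    { toFun := ψ, invFun := φ, left_inv := hφψ, right_inv := hψφ,
      map_mul' := map_mul ψ, map_add' := map_add ψ } with hΨ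
  refine ⟨N, π.comp φ, hπ.comp (fun x => ⟨ψ x, hφψ x⟩), s.image ψ, ?_⟩
  have himg : ((↑(s.image ψ) : Set (FreeAlgebra K (Fin N)))) = Ψ '' ↑s := by
    simp [Finset.coe_image, hΨ]
  rw [himg, span_image_ringEquiv Ψ, hs]
  ext y
  simp only [Set.mem_image, Set.mem_setOf_eq, AlgHom.coe_comp, Function.comp_apply]
  constructor
  · rintro ⟨x, hx, rfl⟩
    show π (φ (ψ x)) = 0
    rw [hφψ]
    exact hx
  · intro hy
    exact ⟨φ y, hy, hψφ y⟩

lemma fp_prod {K B C : Type*} [CommRing K] [Ring B] [Algebra K B] [Ring C] [Algebra K C]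
    (hB : Algebra.IsFinitelyPresentedNC K B) (hC : Algebra.IsFinitelyPresentedNC K C) :
    Algebra.IsFinitelyPresentedNC K (B × C) := by
  classical
  obtain ⟨m, πB, hπB, sB, hsB⟩ := hB
  obtain ⟨n, πC, hπC, sC, hsC⟩ := hC
  have hsBmem : ∀ p, p ∈ TwoSidedIdeal.span (↑sB : Set (FreeAlgebra K (Fin m))) ↔ πB p = 0 :=
    fun p => by rw [← SetLike.mem_coe, hsB]; rfl
  have hsCmem : ∀ q, q ∈ TwoSidedIdeal.span (↑sC : Set (FreeAlgebra K (Fin n))) ↔ πC q = 0 :=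
    fun q => by rw [← SetLike.mem_coe, hsC]; rfl
  let σ : Type := Fin m ⊕ (Fin n ⊕ Unit)
  let F := FreeAlgebra K σ
  letI : Ring F := inferInstanceAs (Ring (FreeAlgebra K σ))
  let ιB : FreeAlgebra K (Fin m) →ₐ[K] F :=
    FreeAlgebra.lift K (fun i => FreeAlgebra.ι K (Sum.inl i : σ))
  let ιC : FreeAlgebra K (Fin n) →ₐ[K] F :=
    FreeAlgebra.lift K (fun j => FreeAlgebra.ι K (Sum.inr (Sum.inl j) : σ))
  let X : Fin m → F := fun i => FreeAlgebra.ι K (Sum.inl i : σ)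
  let Y : Fin n → F := fun j => FreeAlgebra.ι K (Sum.inr (Sum.inl j) : σ)
  let E : F := FreeAlgebra.ι K (Sum.inr (Sum.inr ()) : σ)
  let Φ : F →ₐ[K] B × C := FreeAlgebra.lift K (fun z =>
    Sum.elim (fun i => ((πB (FreeAlgebra.ι K i), 0) : B × C))
      (Sum.elim (fun j => ((0, πC (FreeAlgebra.ι K j)) : B × C))
        (fun _ => ((1, 0) : B × C))) z)
  -- basic computations of Φ on generators
  have ΦX : ∀ i, Φ (X i) = (πB (FreeAlgebra.ι K i), 0) := fun i => FreeAlgebra.lift_ι_apply _ _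
  have ΦY : ∀ j, Φ (Y j) = (0, πC (FreeAlgebra.ι K j)) := fun j => FreeAlgebra.lift_ι_apply _ _
  have ΦE : Φ E = (1, 0) := FreeAlgebra.lift_ι_apply _ _
  have ΦιB : ∀ p, (Φ (ιB p)).1 = πB p := by
    have h : (AlgHom.fst K B C).comp (Φ.comp ιB) = πB := by
      apply FreeAlgebra.hom_ext
      funext i
      simp only [AlgHom.coe_comp, Function.comp_apply, FreeAlgebra.lift_ι_apply, ιB]
      exact congrArg Prod.fst (ΦX i)
    intro p
    exact DFunLike.congr_fun h p
  have ΦιC : ∀ q, (Φ (ιC q)).2 = πC q := by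
    have h : (AlgHom.snd K B C).comp (Φ.comp ιC) = πC := by
      apply FreeAlgebra.hom_ext
      funext j
      simp only [AlgHom.coe_comp, Function.comp_apply, FreeAlgebra.lift_ι_apply, ιC]
      exact congrArg Prod.snd (ΦY j)
    intro q
    exact DFunLike.congr_fun h q
  have ΦBE : ∀ p, Φ (ιB p * E) = (πB p, 0) := by
    intro p
    rw [map_mul, ΦE]
    ext
    · simp [ΦιB p]
    · simp
  have ΦCE : ∀ q, Φ (ιC q * (1 - E)) = (0, πC q) := by
    intro q
    rw [map_mul, map_sub, map_one, ΦE]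
    ext
    · simp [Prod.fst_mul, Prod.fst_sub]
    · simp [Prod.snd_mul, Prod.snd_sub, ΦιC q]
  -- the relations
  let S : Finset F :=
    {E * E - E} ∪
    Finset.image (fun i => E * X i - X i) Finset.univ ∪
    Finset.image (fun i => X i * E - X i) Finset.univ ∪
    Finset.image (fun j => E * Y j) Finset.univ ∪
    Finset.image (fun j => Y j * E) Finset.univ ∪
    Finset.image (fun r => ιB r * E) sB ∪
    Finset.image (fun r => ιC r * (1 - E)) sC
  let J := TwoSidedIdeal.span (↑S : Set F)
  have hSJ : ∀ z ∈ S, z ∈ J := fun z hz => TwoSidedIdeal.subset_span hz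
  have hEE : E * E - E ∈ J := hSJ _ (by simp [S])
  have hEX : ∀ i, E * X i - X i ∈ J := fun i => hSJ _ (by simp [S])
  have hXE : ∀ i, X i * E - X i ∈ J := fun i => hSJ _ (by simp [S])
  have hEY : ∀ j, E * Y j ∈ J := fun j => hSJ _ (by simp [S])
  have hYE : ∀ j, Y j * E ∈ J := fun j => hSJ _ (by simp [S])
  have hSB : ∀ r ∈ sB, ιB r * E ∈ J := fun r hr => hSJ _ (by
    simp only [S, Finset.mem_union]
    exact Or.inl (Or.inr (Finset.mem_image_of_mem _ hr)))
  have hSC : ∀ r ∈ sC, ιC r * (1 - E) ∈ J := fun r hr => hSJ _ (by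
    simp only [S, Finset.mem_union]
    exact Or.inr (Finset.mem_image_of_mem _ hr))
  -- centrality of E modulo J
  have hc : ∀ w : F, E * w - w * E ∈ J := by
    intro w
    induction w using FreeAlgebra.induction with
    | grade0 r =>
      rw [← Algebra.commutes r E, sub_self]
      exact J.zero_mem
    | grade1 z =>
      rcases z with i | j | u
      · have h : E * X i - X i * E = (E * X i - X i) - (X i * E - X i) := by abel
        rw [show FreeAlgebra.ι K (Sum.inl i : σ) = X i from rfl, h]
        exact J.sub_mem (hEX i) (hXE i)
      · have h : E * Y j - Y j * E = (E * Y j) - (Y j * E) := rfl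
        rw [show FreeAlgebra.ι K (Sum.inr (Sum.inl j) : σ) = Y j from rfl, h]
        exact J.sub_mem (hEY j) (hYE j)
      · rw [show FreeAlgebra.ι K (Sum.inr (Sum.inr u) : σ) = E by cases u; rfl, sub_self]
        exact J.zero_mem
    | mul a b ha hb =>
      have h : E * (a * b) - (a * b) * E = (E * a - a * E) * b + a * (E * b - b * E) := by
        noncomm_ring
      rw [h]
      exact J.add_mem (J.mul_mem_right _ _ ha) (J.mul_mem_left _ _ hb)
    | add a b ha hb =>
      have h : E * (a + b) - (a + b) * E = (E * a - a * E) + (E * b - b * E) := by noncomm_ring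
      rw [h]
      exact J.add_mem ha hb
  have hc1 : ∀ w : F, (1 - E) * w - w * (1 - E) ∈ J := by
    intro w
    have h : (1 - E) * w - w * (1 - E) = -(E * w - w * E) := by noncomm_ring
    rw [h]
    exact J.neg_mem (hc w)
  have hE1E : E * (1 - E) ∈ J := by
    have h : E * (1 - E) = -(E * E - E) := by noncomm_ring
    rw [h]; exact J.neg_mem hEE
  have h1EE : (1 - E) * E ∈ J := by
    have h : (1 - E) * E = -(E * E - E) := by noncomm_ring
    rw [h]; exact J.neg_mem hEE
  have h1E1E : (1 - E) * (1 - E) - (1 - E) ∈ J := by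
    have h : (1 - E) * (1 - E) - (1 - E) = E * E - E := by noncomm_ring
    rw [h]; exact hEE
  -- corner multiplication lemmas
  have hCB : ∀ p p' : FreeAlgebra K (Fin m),
      (ιB p * E) * (ιB p' * E) - ιB (p * p') * E ∈ J := by
    intro p p'
    rw [map_mul]
    have h : (ιB p * E) * (ιB p' * E) - (ιB p * ιB p') * E
        = ιB p * ((E * ιB p' - ιB p' * E) * E) + (ιB p * ιB p') * (E * E - E) := by
      noncomm_ring
    rw [h]
    exact J.add_mem (J.mul_mem_left _ _ (J.mul_mem_right _ _ (hc _)))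
      (J.mul_mem_left _ _ hEE)
  have hCC : ∀ q q' : FreeAlgebra K (Fin n),
      (ιC q * (1 - E)) * (ιC q' * (1 - E)) - ιC (q * q') * (1 - E) ∈ J := by
    intro q q'
    rw [map_mul]
    have h : (ιC q * (1 - E)) * (ιC q' * (1 - E)) - (ιC q * ιC q') * (1 - E)
        = ιC q * (((1 - E) * ιC q' - ιC q' * (1 - E)) * (1 - E))
          + (ιC q * ιC q') * ((1 - E) * (1 - E) - (1 - E)) := by
      noncomm_ring
    rw [h]
    exact J.add_mem (J.mul_mem_left _ _ (J.mul_mem_right _ _ (hc1 _)))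
      (J.mul_mem_left _ _ h1E1E)
  have hX1 : ∀ (p : FreeAlgebra K (Fin m)) (q : FreeAlgebra K (Fin n)),
      (ιB p * E) * (ιC q * (1 - E)) ∈ J := by
    intro p q
    have h : (ιB p * E) * (ιC q * (1 - E))
        = ιB p * ((E * ιC q - ιC q * E) * (1 - E)) + (ιB p * ιC q) * (E * (1 - E)) := by
      noncomm_ring
    rw [h]
    exact J.add_mem (J.mul_mem_left _ _ (J.mul_mem_right _ _ (hc _)))
      (J.mul_mem_left _ _ hE1E)
  have hX2 : ∀ (q : FreeAlgebra K (Fin n)) (p : FreeAlgebra K (Fin m)),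
      (ιC q * (1 - E)) * (ιB p * E) ∈ J := by
    intro q p
    have h : (ιC q * (1 - E)) * (ιB p * E)
        = ιC q * (((1 - E) * ιB p - ιB p * (1 - E)) * E) + (ιC q * ιB p) * ((1 - E) * E) := by
      noncomm_ring
    rw [h]
    exact J.add_mem (J.mul_mem_left _ _ (J.mul_mem_right _ _ (hc1 _)))
      (J.mul_mem_left _ _ h1EE)
  -- normal form
  have hnf : ∀ z : F, ∃ (p : FreeAlgebra K (Fin m)) (q : FreeAlgebra K (Fin n)),
      z - (ιB p * E + ιC q * (1 - E)) ∈ J := by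
    intro z
    induction z using FreeAlgebra.induction with
    | grade0 r =>
      refine ⟨algebraMap K _ r, algebraMap K _ r, ?_⟩
      rw [AlgHom.commutes, AlgHom.commutes]
      have h : (algebraMap K F) r - ((algebraMap K F) r * E + (algebraMap K F) r * (1 - E))
          = 0 := by noncomm_ring
      rw [h]
      exact J.zero_mem
    | grade1 z =>
      rcases z with i | j | u
      · refine ⟨FreeAlgebra.ι K i, 0, ?_⟩
        have hb : ιB (FreeAlgebra.ι K i) = X i := FreeAlgebra.lift_ι_apply _ _
        rw [hb, map_zero, zero_mul, add_zero]
        have h : X i - X i * E = -(X i * E - X i) := by abel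
        rw [show FreeAlgebra.ι K (Sum.inl i : σ) = X i from rfl, h]
        exact J.neg_mem (hXE i)
      · refine ⟨0, FreeAlgebra.ι K j, ?_⟩
        have hcj : ιC (FreeAlgebra.ι K j) = Y j := FreeAlgebra.lift_ι_apply _ _
        rw [hcj, map_zero, zero_mul, zero_add]
        have h : Y j - Y j * (1 - E) = Y j * E := by noncomm_ring
        rw [show FreeAlgebra.ι K (Sum.inr (Sum.inl j) : σ) = Y j from rfl, h]
        exact hYE j
      · refine ⟨1, 0, ?_⟩
        rw [map_one, map_zero, zero_mul, add_zero, one_mul,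
          show FreeAlgebra.ι K (Sum.inr (Sum.inr u) : σ) = E by cases u; rfl, sub_self]
        exact J.zero_mem
    | mul a b ha hb =>
      obtain ⟨p₁, q₁, h₁⟩ := ha
      obtain ⟨p₂, q₂, h₂⟩ := hb
      refine ⟨p₁ * p₂, q₁ * q₂, ?_⟩
      have step1 : a * b - (ιB p₁ * E + ιC q₁ * (1 - E)) * (ιB p₂ * E + ιC q₂ * (1 - E)) ∈ J := by
        have h : a * b - (ιB p₁ * E + ιC q₁ * (1 - E)) * (ιB p₂ * E + ιC q₂ * (1 - E))
            = a * (b - (ιB p₂ * E + ιC q₂ * (1 - E)))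
              + (a - (ιB p₁ * E + ιC q₁ * (1 - E))) * (ιB p₂ * E + ιC q₂ * (1 - E)) := by
          noncomm_ring
        rw [h]
        exact J.add_mem (J.mul_mem_left _ _ h₂) (J.mul_mem_right _ _ h₁)
      have step2 : (ιB p₁ * E + ιC q₁ * (1 - E)) * (ιB p₂ * E + ιC q₂ * (1 - E))
          - (ιB (p₁ * p₂) * E + ιC (q₁ * q₂) * (1 - E)) ∈ J := by
        have h : (ιB p₁ * E + ιC q₁ * (1 - E)) * (ιB p₂ * E + ιC q₂ * (1 - E))
            - (ιB (p₁ * p₂) * E + ιC (q₁ * q₂) * (1 - E))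
            = ((ιB p₁ * E) * (ιB p₂ * E) - ιB (p₁ * p₂) * E)
              + (ιB p₁ * E) * (ιC q₂ * (1 - E))
              + (ιC q₁ * (1 - E)) * (ιB p₂ * E)
              + ((ιC q₁ * (1 - E)) * (ιC q₂ * (1 - E)) - ιC (q₁ * q₂) * (1 - E)) := by
          noncomm_ring
        rw [h]
        exact J.add_mem (J.add_mem (J.add_mem (hCB p₁ p₂) (hX1 p₁ q₂)) (hX2 q₁ p₂)) (hCC q₁ q₂)
      have h : a * b - (ιB (p₁ * p₂) * E + ιC (q₁ * q₂) * (1 - E))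
          = (a * b - (ιB p₁ * E + ιC q₁ * (1 - E)) * (ιB p₂ * E + ιC q₂ * (1 - E)))
            + ((ιB p₁ * E + ιC q₁ * (1 - E)) * (ιB p₂ * E + ιC q₂ * (1 - E))
              - (ιB (p₁ * p₂) * E + ιC (q₁ * q₂) * (1 - E))) := by abel
      rw [h]
      exact J.add_mem step1 step2
    | add a b ha hb =>
      obtain ⟨p₁, q₁, h₁⟩ := ha
      obtain ⟨p₂, q₂, h₂⟩ := hb
      refine ⟨p₁ + p₂, q₁ + q₂, ?_⟩
      rw [map_add, map_add]
      have h : a + b - ((ιB p₁ + ιB p₂) * E + (ιC q₁ + ιC q₂) * (1 - E))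
          = (a - (ιB p₁ * E + ιC q₁ * (1 - E))) + (b - (ιB p₂ * E + ιC q₂ * (1 - E))) := by
        noncomm_ring
      rw [h]
      exact J.add_mem h₁ h₂
  -- J is contained in the kernel of Φ
  have hJker : ∀ z ∈ J, Φ z = 0 := by
    set KΦ : TwoSidedIdeal F := TwoSidedIdeal.mk' {x : F | Φ x = 0}
      (by simp) (fun hx hy => by simp_all [map_add])
      (fun hx => by simp_all [map_neg])
      (fun {x y} hy => by simp_all [map_mul])
      (fun {x y} hx => by simp_all [map_mul]) with hKΦ
    have memKΦ : ∀ x : F, x ∈ KΦ ↔ Φ x = 0 := fun x => TwoSidedIdeal.mem_mk' _ _ _ _ _ _ x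
    intro z hz
    refine (memKΦ z).mp (my_span_le ?_ hz)
    intro w hw
    rw [SetLike.mem_coe, memKΦ]
    rw [Finset.mem_coe] at hw
    simp only [S, Finset.mem_union, Finset.mem_singleton, Finset.mem_image,
      Finset.mem_univ, true_and] at hw
    rcases hw with ((((((rfl | ⟨i, rfl⟩) | ⟨i, rfl⟩) | ⟨j, rfl⟩) | ⟨j, rfl⟩) | ⟨r, hr, rfl⟩) | ⟨r, hr, rfl⟩)
    · rw [map_sub, map_mul, ΦE]
      ext <;> simp
    · rw [map_sub, map_mul, ΦE, ΦX]
      ext <;> simp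
    · rw [map_sub, map_mul, ΦE, ΦX]
      ext <;> simp
    · rw [map_mul, ΦE, ΦY]
      ext <;> simp
    · rw [map_mul, ΦE, ΦY]
      ext <;> simp
    · rw [ΦBE, (hsBmem r).mp (TwoSidedIdeal.subset_span hr)]
      rfl
    · rw [ΦCE, (hsCmem r).mp (TwoSidedIdeal.subset_span hr)]
      rfl
  -- Φ is surjective
  have hΦsurj : Function.Surjective Φ := by
    rintro ⟨b, c⟩
    obtain ⟨p, hp⟩ := hπB b
    obtain ⟨q, hq⟩ := hπC c
    refine ⟨ιB p * E + ιC q * (1 - E), ?_⟩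
    rw [map_add, ΦBE, ΦCE, hp, hq]
    ext <;> simp
  -- the ideals used to pull back relations
  have hIB : ∀ p, πB p = 0 → ιB p * E ∈ J := by
    set IB : TwoSidedIdeal (FreeAlgebra K (Fin m)) :=
      TwoSidedIdeal.mk' {p | ιB p * E ∈ J}
      (by simp only [Set.mem_setOf_eq, map_zero, zero_mul]; exact J.zero_mem)
      (fun {x y} hx hy => by
        simp only [Set.mem_setOf_eq, map_add, add_mul] at *
        exact J.add_mem hx hy)
      (fun {x} hx => by
        simp only [Set.mem_setOf_eq, map_neg, neg_mul] at *
        exact J.neg_mem hx)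
      (fun {x y} hy => by
        simp only [Set.mem_setOf_eq, map_mul, mul_assoc] at *
        exact J.mul_mem_left _ _ hy)
      (fun {x y} hx => by
        simp only [Set.mem_setOf_eq, map_mul] at *
        have h : ιB x * ιB y * E
            = (ιB x * ιB y) * (E - E * E) + ιB x * ((ιB y * E - E * ιB y) * E)
              + (ιB x * E) * (ιB y * E) := by noncomm_ring
        rw [h]
        refine J.add_mem (J.add_mem ?_ ?_) ?_
        · exact J.mul_mem_left _ _ (by
            have : E - E * E = -(E * E - E) := by abel
            rw [this]; exact J.neg_mem hEE)
        · refine J.mul_mem_left _ _ (J.mul_mem_right _ _ ?_)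
          have : ιB y * E - E * ιB y = -(E * ιB y - ιB y * E) := by abel
          rw [this]; exact J.neg_mem (hc _)
        · exact J.mul_mem_right _ _ hx) with hIBdef
    have memIB : ∀ p, p ∈ IB ↔ ιB p * E ∈ J := fun p => TwoSidedIdeal.mem_mk' _ _ _ _ _ _ p
    intro p hp
    have hp' : p ∈ TwoSidedIdeal.span (↑sB : Set (FreeAlgebra K (Fin m))) := (hsBmem p).mpr hp
    refine (memIB p).mp (my_span_le ?_ hp')
    intro r hr
    rw [SetLike.mem_coe, memIB]
    exact hSB r hr
  have hIC : ∀ q, πC q = 0 → ιC q * (1 - E) ∈ J := by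
    set IC : TwoSidedIdeal (FreeAlgebra K (Fin n)) :=
      TwoSidedIdeal.mk' {q | ιC q * (1 - E) ∈ J}
      (by simp only [Set.mem_setOf_eq, map_zero, zero_mul]; exact J.zero_mem)
      (fun {x y} hx hy => by
        simp only [Set.mem_setOf_eq, map_add, add_mul] at *
        exact J.add_mem hx hy)
      (fun {x} hx => by
        simp only [Set.mem_setOf_eq, map_neg, neg_mul] at *
        exact J.neg_mem hx)
      (fun {x y} hy => by
        simp only [Set.mem_setOf_eq, map_mul, mul_assoc] at *
        exact J.mul_mem_left _ _ hy)
      (fun {x y} hx => by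
        simp only [Set.mem_setOf_eq, map_mul] at *
        have h : ιC x * ιC y * (1 - E)
            = (ιC x * ιC y) * ((1 - E) - (1 - E) * (1 - E))
              + ιC x * ((ιC y * (1 - E) - (1 - E) * ιC y) * (1 - E))
              + (ιC x * (1 - E)) * (ιC y * (1 - E)) := by noncomm_ring
        rw [h]
        refine J.add_mem (J.add_mem ?_ ?_) ?_
        · exact J.mul_mem_left _ _ (by
            have : (1 - E) - (1 - E) * (1 - E) = -((1 - E) * (1 - E) - (1 - E)) := by abel
            rw [this]; exact J.neg_mem h1E1E)
        · refine J.mul_mem_left _ _ (J.mul_mem_right _ _ ?_)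
          have : ιC y * (1 - E) - (1 - E) * ιC y = -((1 - E) * ιC y - ιC y * (1 - E)) := by abel
          rw [this]; exact J.neg_mem (hc1 _)
        · exact J.mul_mem_right _ _ hx) with hICdef
    have memIC : ∀ q, q ∈ IC ↔ ιC q * (1 - E) ∈ J := fun q => TwoSidedIdeal.mem_mk' _ _ _ _ _ _ q
    intro q hq
    have hq' : q ∈ TwoSidedIdeal.span (↑sC : Set (FreeAlgebra K (Fin n))) := (hsCmem q).mpr hq
    refine (memIC q).mp (my_span_le ?_ hq')
    intro r hr
    rw [SetLike.mem_coe, memIC]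
    exact hSC r hr
  -- conclude
  have hker : (↑J : Set F) = {x : F | Φ x = 0} := by
    ext z
    simp only [SetLike.mem_coe, Set.mem_setOf_eq]
    constructor
    · exact hJker z
    · intro hz
      obtain ⟨p, q, hpq⟩ := hnf z
      have hw : Φ (ιB p * E + ιC q * (1 - E)) = 0 := by
        have h0 : Φ (z - (ιB p * E + ιC q * (1 - E))) = 0 := hJker _ hpq
        rw [map_sub, hz, zero_sub, neg_eq_zero] at h0
        exact h0
      rw [map_add, ΦBE, ΦCE] at hw
      have hb0 : πB p = 0 := by
        have := congrArg Prod.fst hw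
        simpa using this
      have hc0 : πC q = 0 := by
        have := congrArg Prod.snd hw
        simpa using this
      have h : z = (z - (ιB p * E + ιC q * (1 - E))) + (ιB p * E + ιC q * (1 - E)) := by abel
      rw [h]
      exact J.add_mem hpq (J.add_mem (hIB p hb0) (hIC q hc0))
  exact fp_of_fintype_presentation Φ hΦsurj S hker


theorem prod_algebra_fp_iff (K : Type*) [Field K] {B C : Type*}
    [Ring B] [Algebra K B] [Ring C] [Algebra K C] :
    Algebra.IsFinitelyPresentedNC K (B × C) ↔
      Algebra.IsFinitelyPresentedNC K B ∧ Algebra.IsFinitelyPresentedNC K C := by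
  classical
  constructor
  · intro h
    constructor
    · refine fp_of_surj h (AlgHom.fst K B C) (fun b => ⟨(b, 0), rfl⟩)
        {((0 : B), (1 : C))} ?_
      rw [Finset.coe_singleton]
      exact ker_fst
    · refine fp_of_surj h (AlgHom.snd K B C) (fun c => ⟨(0, c), rfl⟩)
        {((1 : B), (0 : C))} ?_
      rw [Finset.coe_singleton]
      exact ker_snd
  · rintro ⟨hB, hC⟩
    exact fp_prod hB hC
end

section
/- Let G be a group, R a commutative ring with 1, and N a normal subgroup of G. Then N is finitely generated as a normal subgroup of G if and only if the kernel of the natural map R[G] → R[G/N] (which is the ideal generated by the elements 1 - g for g ∈ N) is finitely generated as a two-sided ideal of R[G]. -/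
open MonoidAlgebra

/-- image of `1 - n` under the augmentation-type map vanishes when `n ∈ N`. -/
private lemma aug_sub_one_ker {G : Type*} [Group G] (R : Type*) [CommRing R]
    (N : Subgroup G) [N.Normal] {n : G} (hn : n ∈ N) :
    MonoidAlgebra.mapDomainRingHom R (QuotientGroup.mk' N)
      ((1 : MonoidAlgebra R G) - MonoidAlgebra.single n 1) = 0 := by
  have h1 : ((1 : MonoidAlgebra R G)) = MonoidAlgebra.single 1 1 := rfl
  have happ : ∀ y : MonoidAlgebra R G,
      MonoidAlgebra.mapDomainRingHom R (QuotientGroup.mk' N) y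
        = MonoidAlgebra.mapDomain (QuotientGroup.mk' N) y := fun _ => rfl
  rw [map_sub, h1, happ, happ, MonoidAlgebra.mapDomain_single, MonoidAlgebra.mapDomain_single,
    map_one, show (QuotientGroup.mk' N) n = 1 from (QuotientGroup.eq_one_iff n).2 hn, sub_self]

private lemma aug_ker_sub_one {G : Type*} [Group G] (R : Type*) [CommRing R] [Nontrivial R]
    (N : Subgroup G) [N.Normal] {n : G}
    (h : MonoidAlgebra.mapDomainRingHom R (QuotientGroup.mk' N)
      ((1 : MonoidAlgebra R G) - MonoidAlgebra.single n 1) = 0) : n ∈ N := by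
  have h1 : ((1 : MonoidAlgebra R G)) = MonoidAlgebra.single 1 1 := rfl
  have happ : ∀ y : MonoidAlgebra R G,
      MonoidAlgebra.mapDomainRingHom R (QuotientGroup.mk' N) y
        = MonoidAlgebra.mapDomain (QuotientGroup.mk' N) y := fun _ => rfl
  rw [map_sub, h1, sub_eq_zero, happ, happ, MonoidAlgebra.mapDomain_single, MonoidAlgebra.mapDomain_single,
    map_one] at h
  have h2 : (1 : G ⧸ N) = QuotientGroup.mk' N n :=
    Finsupp.single_left_injective (α := G ⧸ N) (one_ne_zero (α := R)) (congrArg MonoidAlgebra.coeff h)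
  exact (QuotientGroup.eq_one_iff n).1 h2.symm

/-- Elements whose `1 - g` lies in a two-sided ideal form a normal subgroup. -/
private lemma normalClosure_sub_one_mem {G : Type*} [Group G] (R : Type*) [CommRing R]
    (J : TwoSidedIdeal (MonoidAlgebra R G)) (s : Set G)
    (hs : ∀ g ∈ s, (1 : MonoidAlgebra R G) - MonoidAlgebra.single g 1 ∈ J) :
    ∀ g ∈ Subgroup.normalClosure s, (1 : MonoidAlgebra R G) - MonoidAlgebra.single g 1 ∈ J := by
  have h1 : ((1 : MonoidAlgebra R G)) = MonoidAlgebra.single 1 1 := rfl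
  let M : Subgroup G :=
  { carrier := {g | (1 : MonoidAlgebra R G) - MonoidAlgebra.single g 1 ∈ J}
    one_mem' := by simp only [Set.mem_setOf_eq, ← h1, sub_self]; exact J.zero_mem
    mul_mem' := by
      intro a b ha hb
      simp only [Set.mem_setOf_eq] at ha hb ⊢
      have : (1 : MonoidAlgebra R G) - MonoidAlgebra.single (a * b) 1 =
          ((1 : MonoidAlgebra R G) - MonoidAlgebra.single a 1) +
            MonoidAlgebra.single a 1 * ((1 : MonoidAlgebra R G) - MonoidAlgebra.single b 1) := by
        rw [mul_sub, mul_one, MonoidAlgebra.single_mul_single, mul_one]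
        abel
      rw [this]
      exact J.add_mem ha (J.mul_mem_left _ _ hb)
    inv_mem' := by
      intro a ha
      simp only [Set.mem_setOf_eq] at ha ⊢
      have : (1 : MonoidAlgebra R G) - MonoidAlgebra.single a⁻¹ 1 =
          -(MonoidAlgebra.single a⁻¹ 1 * ((1 : MonoidAlgebra R G) - MonoidAlgebra.single a 1)) := by
        rw [mul_sub, mul_one, MonoidAlgebra.single_mul_single, inv_mul_cancel, mul_one, ← h1]
        abel
      rw [this]
      exact J.neg_mem (J.mul_mem_left _ _ ha) }
  have hM : M.Normal := by
    constructor
    intro a ha g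
    simp only [M, Subgroup.mem_mk, Set.mem_setOf_eq] at ha ⊢
    have : (1 : MonoidAlgebra R G) - MonoidAlgebra.single (g * a * g⁻¹) 1 =
        MonoidAlgebra.single g 1 *
          ((1 : MonoidAlgebra R G) - MonoidAlgebra.single a 1) * MonoidAlgebra.single g⁻¹ 1 := by
      simp only [mul_sub, sub_mul, mul_one, one_mul, MonoidAlgebra.single_mul_single,
        mul_inv_cancel]
      rw [← h1]
    change (1 : MonoidAlgebra R G) - MonoidAlgebra.single (g * a * g⁻¹) 1 ∈ J
    rw [this]
    exact J.mul_mem_right _ _ (J.mul_mem_left _ _ ha)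
  haveI := hM
  intro g hg
  exact Subgroup.normalClosure_le_normal (N := M) (fun g hg => hs g hg) hg

/-- An element of the augmentation kernel lies in the span of finitely many `1 - n`, `n ∈ N`. -/
private lemma key_decomp {G : Type*} [Group G] (R : Type*) [CommRing R]
    (N : Subgroup G) [N.Normal] (x : MonoidAlgebra R G)
    (hx : MonoidAlgebra.mapDomainRingHom R (QuotientGroup.mk' N) x = 0) :
    ∃ F : Finset G, (↑F : Set G) ⊆ (N : Set G) ∧
      x ∈ TwoSidedIdeal.span
        ((fun n => (1 : MonoidAlgebra R G) - MonoidAlgebra.single n 1) '' (↑F : Set G)) := by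
  classical
  refine ⟨x.coeff.support.image (fun g => g⁻¹ * (QuotientGroup.mk g : G ⧸ N).out), ?_, ?_⟩
  · intro n hn
    simp only [Finset.coe_image, Set.mem_image, Finset.mem_coe] at hn
    obtain ⟨g, -, rfl⟩ := hn
    exact QuotientGroup.eq.mp (QuotientGroup.out_eq' _).symm
  · have hxd : Finsupp.mapDomain (fun g => (QuotientGroup.mk g : G ⧸ N).out) x.coeff = 0 := by
      rw [show (fun g : G => (QuotientGroup.mk g : G ⧸ N).out)
          = (Quotient.out ∘ (QuotientGroup.mk : G → G ⧸ N)) from rfl,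
        Finsupp.mapDomain_comp]
      have h0 : Finsupp.mapDomain (QuotientGroup.mk : G → G ⧸ N) x.coeff = 0 :=
        congrArg MonoidAlgebra.coeff hx
      rw [h0, Finsupp.mapDomain_zero]
    have hdecomp : x = ∑ g ∈ x.coeff.support,
        MonoidAlgebra.single g (x.coeff g) *
          ((1 : MonoidAlgebra R G) -
            MonoidAlgebra.single (g⁻¹ * (QuotientGroup.mk g : G ⧸ N).out) 1) := by
      have h2 : ∀ g : G, MonoidAlgebra.single g (x.coeff g) *
          ((1 : MonoidAlgebra R G) -
            MonoidAlgebra.single (g⁻¹ * (QuotientGroup.mk g : G ⧸ N).out) 1)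
          = MonoidAlgebra.single g (x.coeff g)
            - MonoidAlgebra.single ((QuotientGroup.mk g : G ⧸ N).out) (x.coeff g) := by
        intro g
        rw [mul_sub, mul_one, MonoidAlgebra.single_mul_single, mul_inv_cancel_left, mul_one]
      simp_rw [h2]
      rw [Finset.sum_sub_distrib]
      have h3 : ∑ g ∈ x.coeff.support, MonoidAlgebra.single g (x.coeff g) = x := by
        exact x.sum_coeff_single
      have h4 : ∑ g ∈ x.coeff.support,
          MonoidAlgebra.single ((QuotientGroup.mk g : G ⧸ N).out) (x.coeff g)
          = MonoidAlgebra.ofCoeff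
              (Finsupp.mapDomain (fun g => (QuotientGroup.mk g : G ⧸ N).out) x.coeff) := by
        simp only [Finsupp.mapDomain, MonoidAlgebra.ofCoeff_finsuppSum, MonoidAlgebra.ofCoeff_single]
        rfl
      rw [h3, h4, hxd, MonoidAlgebra.ofCoeff_zero, sub_zero]
    set J := TwoSidedIdeal.span
        ((fun n => (1 : MonoidAlgebra R G) - MonoidAlgebra.single n 1) ''
          ↑(x.coeff.support.image (fun g => g⁻¹ * (QuotientGroup.mk g : G ⧸ N).out))) with hJ
    rw [hdecomp]
    apply Finset.sum_induction _ (· ∈ _) (fun a b ha hb => TwoSidedIdeal.add_mem _ ha hb)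
      (TwoSidedIdeal.zero_mem _)
    intro g hg
    refine TwoSidedIdeal.mul_mem_left _ _ _ (TwoSidedIdeal.subset_span ?_)
    exact ⟨g⁻¹ * (QuotientGroup.mk g : G ⧸ N).out, by
      simp only [Finset.coe_image, Set.mem_image, Finset.mem_coe]; exact ⟨g, hg, rfl⟩, rfl⟩

theorem normal_fg_iff_augmentation_kernel_fg
    {G : Type*} [Group G] (R : Type*) [CommRing R] [Nontrivial R]
    (N : Subgroup G) [N.Normal] :
    (∃ s : Finset G, ↑s ⊆ (N : Set G) ∧ Subgroup.normalClosure ↑s = N) ↔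
      (∃ t : Finset (MonoidAlgebra R G),
        (↑(TwoSidedIdeal.span (↑t : Set (MonoidAlgebra R G))) : Set (MonoidAlgebra R G)) =
          {x | MonoidAlgebra.mapDomainRingHom R (QuotientGroup.mk' N) x = 0}) := by
  classical
  constructor
  · rintro ⟨s, hsN, hs⟩
    refine ⟨s.image (fun g => (1 : MonoidAlgebra R G) - MonoidAlgebra.single g 1), ?_⟩
    have hset : (↑(s.image (fun g => (1 : MonoidAlgebra R G) - MonoidAlgebra.single g 1)) :
        Set (MonoidAlgebra R G))
        = (fun g => (1 : MonoidAlgebra R G) - MonoidAlgebra.single g 1) '' (↑s : Set G) :=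
      Finset.coe_image
    rw [hset]
    have hsN' : (↑s : Set G) ⊆ (N : Set G) := hsN
    have hs' : Subgroup.normalClosure ((↑s : Set G)) = N := hs
    ext x
    simp only [SetLike.mem_coe, Set.mem_setOf_eq]
    constructor
    · intro hxmem
      refine TwoSidedIdeal.mem_span_iff.mp hxmem
        (TwoSidedIdeal.ker (MonoidAlgebra.mapDomainRingHom R (QuotientGroup.mk' N))) ?_
      rintro y ⟨g, hg, rfl⟩
      exact (TwoSidedIdeal.mem_ker _).2 (aug_sub_one_ker R N (hsN' hg))
    · intro hxker
      obtain ⟨F, hFN, hF⟩ := key_decomp R N x hxker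
      have step : ∀ g ∈ (↑s : Set G),
          (1 : MonoidAlgebra R G) - MonoidAlgebra.single g 1 ∈ TwoSidedIdeal.span
            ((fun g => (1 : MonoidAlgebra R G) - MonoidAlgebra.single g 1) '' (↑s : Set G)) :=
        fun g hg => TwoSidedIdeal.subset_span ⟨g, hg, rfl⟩
      refine TwoSidedIdeal.mem_span_iff.mp hF _ ?_
      rintro y ⟨n, hn, rfl⟩
      have hnN : n ∈ Subgroup.normalClosure ((↑s : Set G)) := by
        rw [hs']; exact hFN hn
      exact SetLike.mem_coe.mpr
        (normalClosure_sub_one_mem R _ ((↑s : Set G)) step n hnN)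
  · rintro ⟨t, ht⟩
    have hker : ∀ x : {x // x ∈ t},
        MonoidAlgebra.mapDomainRingHom R (QuotientGroup.mk' N) x.1 = 0 := by
      intro x
      have hx : x.1 ∈ (↑(TwoSidedIdeal.span (↑t : Set (MonoidAlgebra R G))) :
          Set (MonoidAlgebra R G)) := TwoSidedIdeal.subset_span x.2
      rw [ht] at hx
      exact hx
    choose F hF1 hF2 using fun x : {x // x ∈ t} => key_decomp R N x.1 (hker x)
    refine ⟨t.attach.biUnion F, ?_, ?_⟩
    · intro g hg
      have hg' : g ∈ t.attach.biUnion F := hg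
      rw [Finset.mem_biUnion] at hg'
      obtain ⟨x, -, hgx⟩ := hg'
      exact hF1 x hgx
    · have hSN : (↑(t.attach.biUnion F) : Set G) ⊆ (N : Set G) := by
        intro g hg
        have hg' : g ∈ t.attach.biUnion F := hg
        rw [Finset.mem_biUnion] at hg'
        obtain ⟨x, -, hgx⟩ := hg'
        exact hF1 x hgx
      refine le_antisymm (Subgroup.normalClosure_le_normal hSN) ?_
      intro n hn
      have hspan : ∀ x ∈ t, MonoidAlgebra.mapDomainRingHom R
          (QuotientGroup.mk' (Subgroup.normalClosure ((↑(t.attach.biUnion F) : Set G)))) x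
            = 0 := by
        intro y hyt
        have hmem := hF2 ⟨y, hyt⟩
        refine (TwoSidedIdeal.mem_ker (MonoidAlgebra.mapDomainRingHom R
          (QuotientGroup.mk' (Subgroup.normalClosure ((↑(t.attach.biUnion F) : Set G)))))).1
          (TwoSidedIdeal.mem_span_iff.mp hmem _ ?_)
        rintro z ⟨m, hm, rfl⟩
        have hmS : m ∈ t.attach.biUnion F := by
          rw [Finset.mem_biUnion]
          exact ⟨⟨y, hyt⟩, Finset.mem_attach _ _, hm⟩
        have hmN' : m ∈ Subgroup.normalClosure ((↑(t.attach.biUnion F) : Set G)) :=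
          Subgroup.subset_normalClosure hmS
        exact (TwoSidedIdeal.mem_ker _).2 (aug_sub_one_ker R _ hmN')
      have h1 : (1 : MonoidAlgebra R G) - MonoidAlgebra.single n 1 ∈
          TwoSidedIdeal.span (↑t : Set (MonoidAlgebra R G)) := by
        rw [← SetLike.mem_coe, ht]
        exact aug_sub_one_ker R N hn
      have h2 := TwoSidedIdeal.mem_span_iff.mp h1
        (TwoSidedIdeal.ker (MonoidAlgebra.mapDomainRingHom R
          (QuotientGroup.mk' (Subgroup.normalClosure ((↑(t.attach.biUnion F) : Set G))))))
        (fun y hy => (TwoSidedIdeal.mem_ker _).2 (hspan y hy))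
      exact aug_ker_sub_one R _ ((TwoSidedIdeal.mem_ker _).1 h2)
end

section
/- Let G be a finitely generated infinite group. Then the wreath product ℤ ≀ G (the semidirect product of the free abelian group on the set G, with G acting by permuting the basis via right multiplication) is a finitely generated group that is not finitely presented. -/
/-- The action of `G` on the free abelian group `⊕_{g ∈ G} ℤ = (G →₀ ℤ)` regularly permuting
the basis via right multiplication. -/
noncomputable def wreathAction (G : Type*) [Group G] : G →* MulAut (Multiplicative (G →₀ ℤ)) where
  toFun g := AddEquiv.toMultiplicative (Finsupp.domCongr (Equiv.mulRight g⁻¹))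
  map_one' := by
    ext f
    simp [Finsupp.domCongr_apply, Equiv.Perm.one_def]
  map_mul' g h := by
    ext f
    simp [Finsupp.domCongr_apply]
    try ext x
    simp [Finsupp.equivMapDomain_apply, Equiv.Perm.mul_def, Equiv.symm_trans_apply, mul_assoc]

/-- The restricted wreath product `ℤ ≀ G`, as the semidirect product
`(⊕_{g ∈ G} ℤ) ⋊ G`. -/
def WreathZ (G : Type*) [Group G] := Multiplicative (G →₀ ℤ) ⋊[wreathAction G] G

noncomputable instance (G : Type*) [Group G] : Group (WreathZ G) :=
  inferInstanceAs (Group (Multiplicative (G →₀ ℤ) ⋊[wreathAction G] G))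

namespace WreathProof

variable {G : Type*} [Group G]

/-- right translation of the basis -/
def sig (g : G) (f : G →₀ ℤ) : G →₀ ℤ := Finsupp.equivMapDomain (Equiv.mulRight g⁻¹) f

@[simp] lemma sig_apply (g : G) (f : G →₀ ℤ) (x : G) : sig g f x = f (x * g) := by
  simp [sig, Finsupp.equivMapDomain_apply]

@[simp] lemma sig_zero (g : G) : sig g (0 : G →₀ ℤ) = 0 := by ext x; simp

@[simp] lemma sig_add (g : G) (f f' : G →₀ ℤ) : sig g (f + f') = sig g f + sig g f' := by
  ext x; simp

@[simp] lemma sig_neg (g : G) (f : G →₀ ℤ) : sig g (-f) = -(sig g f) := by ext x; simp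

lemma sig_sig (g h : G) (f : G →₀ ℤ) : sig g (sig h f) = sig (g * h) f := by
  ext x; simp [mul_assoc]

@[simp] lemma sig_one (f : G →₀ ℤ) : sig (1 : G) f = f := by ext x; simp

lemma sig_single (g x : G) (m : ℤ) : sig g (Finsupp.single x m) = Finsupp.single (x * g⁻¹) m := by
  simp [sig, Finsupp.equivMapDomain_single]

lemma chi_inv (χ : G →* ℤˣ) (g : G) : χ g⁻¹ = χ g := by
  rw [map_inv]; exact inv_eq_of_mul_eq_one_right (Int.units_mul_self _)

/-- the bilinear pairing used for the central extension -/
def bform (χ : G →* ℤˣ) (γ : G → ℤ) (f f' : G →₀ ℤ) : ℤ :=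
  f.sum fun x m => f'.sum fun y n => m * n * ((χ y : ℤ) * γ (x * y⁻¹))

lemma bform_zero_left (χ : G →* ℤˣ) (γ : G → ℤ) (f' : G →₀ ℤ) : bform χ γ 0 f' = 0 :=
  Finsupp.sum_zero_index

lemma sum_pointwise_add {α : Type*} (f : α →₀ ℤ) (h₁ h₂ : α → ℤ → ℤ) :
    (f.sum fun a b => h₁ a b + h₂ a b) = f.sum h₁ + f.sum h₂ := by
  unfold Finsupp.sum
  exact Finset.sum_add_distrib

lemma bform_zero_right (χ : G →* ℤˣ) (γ : G → ℤ) (f : G →₀ ℤ) : bform χ γ f 0 = 0 := by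
  unfold bform
  calc (f.sum fun x m => Finsupp.sum 0 fun y n => m * n * ((χ y : ℤ) * γ (x * y⁻¹)))
      = f.sum fun _ _ => (0:ℤ) := Finsupp.sum_congr fun x _ => Finsupp.sum_zero_index
    _ = 0 := Finset.sum_const_zero

lemma bform_add_left (χ : G →* ℤˣ) (γ : G → ℤ) (f₁ f₂ f' : G →₀ ℤ) :
    bform χ γ (f₁ + f₂) f' = bform χ γ f₁ f' + bform χ γ f₂ f' := by
  unfold bform
  apply Finsupp.sum_add_index'
  · intro x
    calc (f'.sum fun y n => (0:ℤ) * n * ((χ y : ℤ) * γ (x * y⁻¹)))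
        = f'.sum fun _ _ => (0:ℤ) := Finsupp.sum_congr fun y _ => by ring
      _ = 0 := Finset.sum_const_zero
  · intro x m₁ m₂
    calc (f'.sum fun y n => (m₁ + m₂) * n * ((χ y : ℤ) * γ (x * y⁻¹)))
        = f'.sum fun y n => m₁ * n * ((χ y : ℤ) * γ (x * y⁻¹))
            + m₂ * n * ((χ y : ℤ) * γ (x * y⁻¹)) := Finsupp.sum_congr fun y _ => by ring
      _ = _ := sum_pointwise_add _ _ _

lemma bform_add_right (χ : G →* ℤˣ) (γ : G → ℤ) (f f₁ f₂ : G →₀ ℤ) :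
    bform χ γ f (f₁ + f₂) = bform χ γ f f₁ + bform χ γ f f₂ := by
  unfold bform
  rw [← sum_pointwise_add]
  apply Finsupp.sum_congr
  intro x _
  apply Finsupp.sum_add_index'
  · intro y; ring
  · intro y n₁ n₂; ring

lemma bform_neg_left (χ : G →* ℤˣ) (γ : G → ℤ) (f f' : G →₀ ℤ) :
    bform χ γ (-f) f' = -bform χ γ f f' := by
  have h := bform_add_left χ γ f (-f) f'
  rw [add_neg_cancel, bform_zero_left] at h
  linarith

lemma bform_neg_right (χ : G →* ℤˣ) (γ : G → ℤ) (f f' : G →₀ ℤ) :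
    bform χ γ f (-f') = -bform χ γ f f' := by
  have h := bform_add_right χ γ f f' (-f')
  rw [add_neg_cancel, bform_zero_right] at h
  linarith

lemma bform_single_single (χ : G →* ℤˣ) (γ : G → ℤ) (x y : G) (m n : ℤ) :
    bform χ γ (Finsupp.single x m) (Finsupp.single y n) = m * n * ((χ y : ℤ) * γ (x * y⁻¹)) := by
  unfold bform
  rw [Finsupp.sum_single_index, Finsupp.sum_single_index]
  · ring
  · rw [Finsupp.sum_single_index] <;> ring

lemma bform_sig (χ : G →* ℤˣ) (γ : G → ℤ) (g : G) (f f' : G →₀ ℤ) :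
    bform χ γ (sig g f) (sig g f') = (χ g : ℤ) * bform χ γ f f' := by
  induction f using Finsupp.induction_linear with
  | zero => simp [bform_zero_left]
  | add p q hp hq => rw [sig_add, bform_add_left, bform_add_left, hp, hq]; ring
  | single x m =>
    induction f' using Finsupp.induction_linear with
    | zero => simp [bform_zero_right]
    | add p q hp hq => rw [sig_add, bform_add_right, bform_add_right, hp, hq]; ring
    | single y n =>
      rw [sig_single, sig_single, bform_single_single, bform_single_single]
      have h1 : x * g⁻¹ * (y * g⁻¹)⁻¹ = x * y⁻¹ := by group
      have h2 : ((χ (y * g⁻¹) : ℤˣ) : ℤ) = (χ g : ℤ) * (χ y : ℤ) := by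
        rw [map_mul, chi_inv]
        push_cast
        ring
      rw [h1, h2]; ring

lemma bform_gamma_zero (χ : G →* ℤˣ) (f f' : G →₀ ℤ) :
    bform χ (fun _ => (0:ℤ)) f f' = 0 := by
  unfold bform
  calc (f.sum fun x m => f'.sum fun y n => m * n * ((χ y : ℤ) * 0))
      = f.sum fun _ _ => (0:ℤ) := Finsupp.sum_congr fun x _ => by
        calc (f'.sum fun y n => _ * n * ((χ y : ℤ) * 0)) = f'.sum fun _ _ => (0:ℤ) :=
              Finsupp.sum_congr fun y _ => by ring
          _ = 0 := Finset.sum_const_zero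
    _ = 0 := Finset.sum_const_zero

lemma bform_vanish (χ : G →* ℤˣ) (γ : G → ℤ) (f f' : G →₀ ℤ)
    (h : ∀ x ∈ f.support, ∀ y ∈ f'.support, γ (x * y⁻¹) = 0) :
    bform χ γ f f' = 0 := by
  unfold bform Finsupp.sum
  apply Finset.sum_eq_zero
  intro x hx
  apply Finset.sum_eq_zero
  intro y hy
  simp only []
  rw [h x hx y hy]; ring

/-- Carrier of the twisted central extension `((⊕_G ℤ) ×_β ℤ) ⋊ G`.  The parameters
`χ` (a sign character) and `γ` (an arbitrary function) are phantom type parameters that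
determine the group structure. -/
@[ext]
structure K (G : Type*) [Group G] (χ : G →* ℤˣ) (γ : G → ℤ) where
  f : G →₀ ℤ
  z : ℤ
  g : G

namespace K

variable {χ : G →* ℤˣ} {γ : G → ℤ}

noncomputable instance : Group (K G χ γ) where
  mul x y := ⟨x.f + sig x.g y.f, x.z + (χ x.g : ℤ) * y.z + bform χ γ x.f (sig x.g y.f),
    x.g * y.g⟩
  one := ⟨0, 0, 1⟩
  inv x := ⟨-(sig x.g⁻¹ x.f),
    -((χ x.g : ℤ) * x.z) + bform χ γ (sig x.g⁻¹ x.f) (sig x.g⁻¹ x.f), x.g⁻¹⟩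
  mul_assoc x y w := by
    refine K.ext ?_ ?_ ?_
    · show x.f + sig x.g y.f + sig (x.g * y.g) w.f
        = x.f + sig x.g (y.f + sig y.g w.f)
      rw [sig_add, sig_sig, add_assoc]
    · show x.z + (χ x.g : ℤ) * y.z + bform χ γ x.f (sig x.g y.f)
          + ((χ (x.g * y.g) : ℤ)) * w.z
          + bform χ γ (x.f + sig x.g y.f) (sig (x.g * y.g) w.f)
        = x.z + (χ x.g : ℤ) * (y.z + (χ y.g : ℤ) * w.z + bform χ γ y.f (sig y.g w.f))
          + bform χ γ x.f (sig x.g (y.f + sig y.g w.f))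
      rw [bform_add_left, sig_add, bform_add_right, ← sig_sig, bform_sig, map_mul]
      push_cast
      ring
    · show x.g * y.g * w.g = x.g * (y.g * w.g)
      exact mul_assoc _ _ _
  one_mul x := by
    refine K.ext ?_ ?_ ?_
    · show (0 : G →₀ ℤ) + sig 1 x.f = x.f
      simp
    · show (0:ℤ) + (χ 1 : ℤ) * x.z + bform χ γ 0 (sig 1 x.f) = x.z
      rw [bform_zero_left, map_one]
      push_cast; ring
    · show 1 * x.g = x.g
      simp
  mul_one x := by
    refine K.ext ?_ ?_ ?_
    · show x.f + sig x.g 0 = x.f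
      simp
    · show x.z + (χ x.g : ℤ) * 0 + bform χ γ x.f (sig x.g 0) = x.z
      rw [sig_zero, bform_zero_right]; ring
    · show x.g * 1 = x.g
      simp
  inv_mul_cancel x := by
    refine K.ext ?_ ?_ ?_
    · show -(sig x.g⁻¹ x.f) + sig x.g⁻¹ x.f = 0
      simp
    · show -((χ x.g : ℤ) * x.z) + bform χ γ (sig x.g⁻¹ x.f) (sig x.g⁻¹ x.f)
          + (χ x.g⁻¹ : ℤ) * x.z
          + bform χ γ (-(sig x.g⁻¹ x.f)) (sig x.g⁻¹ x.f) = 0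
      rw [bform_neg_left, chi_inv]; ring
    · show x.g⁻¹ * x.g = 1
      simp

lemma mul_def (x y : K G χ γ) :
    x * y = ⟨x.f + sig x.g y.f, x.z + (χ x.g : ℤ) * y.z + bform χ γ x.f (sig x.g y.f),
      x.g * y.g⟩ := rfl

lemma inv_def (x : K G χ γ) :
    x⁻¹ = ⟨-(sig x.g⁻¹ x.f),
      -((χ x.g : ℤ) * x.z) + bform χ γ (sig x.g⁻¹ x.f) (sig x.g⁻¹ x.f), x.g⁻¹⟩ := rfl

lemma one_def : (1 : K G χ γ) = ⟨0, 0, 1⟩ := rfl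

/-- the copy of `G` inside `K`. -/
noncomputable def inr : G →* K G χ γ where
  toFun g := ⟨0, 0, g⟩
  map_one' := rfl
  map_mul' g h := by
    refine (K.ext ?_ ?_ ?_).symm
    · show (0 : G →₀ ℤ) + sig g 0 = 0
      simp
    · show (0:ℤ) + (χ g : ℤ) * 0 + bform χ γ 0 (sig g 0) = 0
      rw [bform_zero_left]; ring
    · rfl

@[simp] lemma inr_f (g : G) : (inr g : K G χ γ).f = 0 := rfl
@[simp] lemma inr_z (g : G) : (inr g : K G χ γ).z = 0 := rfl
@[simp] lemma inr_g (g : G) : (inr g : K G χ γ).g = g := rfl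
@[simp] lemma mul_f (x y : K G χ γ) : (x * y).f = x.f + sig x.g y.f := rfl
@[simp] lemma mul_z (x y : K G χ γ) :
    (x * y).z = x.z + (χ x.g : ℤ) * y.z + bform χ γ x.f (sig x.g y.f) := rfl
@[simp] lemma mul_g (x y : K G χ γ) : (x * y).g = x.g * y.g := rfl
@[simp] lemma inv_f (x : K G χ γ) : (x⁻¹).f = -(sig x.g⁻¹ x.f) := rfl
@[simp] lemma inv_z (x : K G χ γ) :
    (x⁻¹).z = -((χ x.g : ℤ) * x.z) + bform χ γ (sig x.g⁻¹ x.f) (sig x.g⁻¹ x.f) := rfl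
@[simp] lemma inv_g (x : K G χ γ) : (x⁻¹).g = x.g⁻¹ := rfl
@[simp] lemma one_f : (1 : K G χ γ).f = 0 := rfl
@[simp] lemma one_z : (1 : K G χ γ).z = 0 := rfl
@[simp] lemma one_g : (1 : K G χ γ).g = 1 := rfl

end K

open SemidirectProduct in
/-- inclusion of the base group into the wreath product -/
noncomputable def winl : Multiplicative (G →₀ ℤ) →* WreathZ G :=
  (SemidirectProduct.inl : _ →* Multiplicative (G →₀ ℤ) ⋊[wreathAction G] G)

open SemidirectProduct in
/-- inclusion of `G` into the wreath product -/
noncomputable def winr : G →* WreathZ G :=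
  (SemidirectProduct.inr : _ →* Multiplicative (G →₀ ℤ) ⋊[wreathAction G] G)

lemma wreath_toAdd (g : G) (m : Multiplicative (G →₀ ℤ)) :
    Multiplicative.toAdd (wreathAction G g m) = sig g (Multiplicative.toAdd m) := by
  rfl

/-- the "forget the centre" map, sending `W = M ⋊ G` into the `γ = 0` group `K`. -/
noncomputable def womega (χ : G →* ℤˣ) : WreathZ G →* K G χ (fun _ => 0) where
  toFun x := ⟨Multiplicative.toAdd
      (SemidirectProduct.left (x : Multiplicative (G →₀ ℤ) ⋊[wreathAction G] G)), 0,
      SemidirectProduct.right (x : Multiplicative (G →₀ ℤ) ⋊[wreathAction G] G)⟩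
  map_one' := rfl
  map_mul' x y := by
    refine (K.ext ?_ ?_ ?_).symm
    · show Multiplicative.toAdd (SemidirectProduct.left x)
          + sig (SemidirectProduct.right x) (Multiplicative.toAdd (SemidirectProduct.left y))
        = Multiplicative.toAdd (SemidirectProduct.left
          ((x : Multiplicative (G →₀ ℤ) ⋊[wreathAction G] G) * y))
      rfl
    · show (0:ℤ) + (χ _ : ℤ) * 0 + bform χ (fun _ => 0) _ _ = 0
      rw [bform_gamma_zero]; ring
    · rfl


section Generators

open scoped commutatorElement

variable (S : Finset G)

/-- generator alphabet : `none` is the basis vector `δ₁`, `some i` are generators of `G`. -/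
abbrev X (S : Finset G) := Option {a : G // a ∈ S}

/-- the canonical surjection onto the wreath product -/
noncomputable def rho : FreeGroup (X S) →* WreathZ G :=
  FreeGroup.lift fun o => o.elim (winl (Multiplicative.ofAdd (Finsupp.single (1:G) 1)))
    (fun i => winr (i : G))

/-- the comparison maps into the twisted extensions -/
noncomputable def xi (χ : G →* ℤˣ) (γ : G → ℤ) : FreeGroup (X S) →* K G χ γ :=
  FreeGroup.lift fun o => o.elim (⟨Finsupp.single (1:G) 1, 0, 1⟩ : K G χ γ)
    (fun i => K.inr (i : G))

@[simp] lemma rho_none : rho S (FreeGroup.of (none : X S)) =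
    winl (Multiplicative.ofAdd (Finsupp.single (1:G) 1)) := by
  simp [rho]

@[simp] lemma rho_some (i : {a : G // a ∈ S}) :
    rho S (FreeGroup.of (some i : X S)) = winr (i : G) := by
  simp [rho]

@[simp] lemma xi_none (χ : G →* ℤˣ) (γ : G → ℤ) :
    xi S χ γ (FreeGroup.of (none : X S)) = (⟨Finsupp.single (1:G) 1, 0, 1⟩ : K G χ γ) := by
  simp [xi]

@[simp] lemma xi_some (χ : G →* ℤˣ) (γ : G → ℤ) (i : {a : G // a ∈ S}) :
    xi S χ γ (FreeGroup.of (some i : X S)) = (K.inr (i : G) : K G χ γ) := by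
  simp [xi]

/-- the f/g coordinates of `xi` agree with those of `rho` (they do not depend on `γ, χ`). -/
lemma xi_coords (χ : G →* ℤˣ) (γ : G → ℤ) (t : FreeGroup (X S)) :
    (xi S χ γ t).f = (womega χ (rho S t)).f ∧ (xi S χ γ t).g = (womega χ (rho S t)).g := by
  -- the "kill z" map is a homomorphism K G χ γ →* K G χ 0
  let kp : K G χ γ →* K G χ (fun _ => 0) :=
    { toFun := fun x => ⟨x.f, 0, x.g⟩
      map_one' := rfl
      map_mul' := fun x y => by
        refine (K.ext ?_ ?_ ?_).symm <;>
          simp [K.mul_def, bform_gamma_zero] }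
  have h : kp.comp (xi S χ γ) = (womega χ).comp (rho S) := by
    apply FreeGroup.ext_hom
    intro a
    match a with
    | none =>
      simp only [MonoidHom.comp_apply, rho_none, xi_none]
      rfl
    | some i =>
      simp only [MonoidHom.comp_apply, rho_some, xi_some]
      rfl
  have := DFunLike.congr_fun h t
  constructor
  · exact congrArg K.f this
  · exact congrArg K.g this

lemma xi_f (χ : G →* ℤˣ) (γ : G → ℤ) (t : FreeGroup (X S)) :
    (xi S χ γ t).f = Multiplicative.toAdd
      (SemidirectProduct.left
        (rho S t : Multiplicative (G →₀ ℤ) ⋊[wreathAction G] G)) :=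
  (xi_coords S χ γ t).1

lemma xi_g (χ : G →* ℤˣ) (γ : G → ℤ) (t : FreeGroup (X S)) :
    (xi S χ γ t).g = SemidirectProduct.right
      (rho S t : Multiplicative (G →₀ ℤ) ⋊[wreathAction G] G) :=
  (xi_coords S χ γ t).2

/-- abbreviation: the Finsupp coordinate of `rho` -/
noncomputable def rF (t : FreeGroup (X S)) : G →₀ ℤ :=
  Multiplicative.toAdd (SemidirectProduct.left
    (rho S t : Multiplicative (G →₀ ℤ) ⋊[wreathAction G] G))

/-- abbreviation: the `G` coordinate of `rho` -/
noncomputable def rG (t : FreeGroup (X S)) : G :=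
  SemidirectProduct.right (rho S t : Multiplicative (G →₀ ℤ) ⋊[wreathAction G] G)

lemma xi_f' (χ : G →* ℤˣ) (γ : G → ℤ) (t : FreeGroup (X S)) :
    (xi S χ γ t).f = rF S t := xi_f S χ γ t

lemma xi_g' (χ : G →* ℤˣ) (γ : G → ℤ) (t : FreeGroup (X S)) :
    (xi S χ γ t).g = rG S t := xi_g S χ γ t

lemma xi_z_finite_dep (t : FreeGroup (X S)) :
    ∃ B : Finset G, ∀ (χ : G →* ℤˣ) (γ : G → ℤ),
      (∀ b ∈ B, γ b = 0) → γ 1 = 0 →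
      (xi S χ γ t).z = (xi S χ (fun _ => 0) t).z := by
  classical
  have hpure : ∀ x : X S, (pure x : FreeGroup (X S)) = FreeGroup.of x := fun _ => rfl
  induction t using FreeGroup.induction_on with
  | C1 =>
    refine ⟨∅, fun χ γ _ _ => ?_⟩
    rw [map_one, map_one]
    rfl
  | of x =>
    refine ⟨∅, fun χ γ _ _ => ?_⟩
    match x with
    | none => rw [xi_none, xi_none]
    | some i => rw [xi_some, xi_some]; rfl
  | inv_of x _ =>
    refine ⟨∅, fun χ γ _ hγ1 => ?_⟩
    rw [map_inv, map_inv]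
    match x with
    | none =>
      rw [xi_none, xi_none]
      simp [sig_single, bform_single_single, bform_gamma_zero, hγ1]
    | some i =>
      rw [xi_some, xi_some]
      simp [bform_zero_left, bform_gamma_zero]
  | mul x y ihx ihy =>
    obtain ⟨Bx, hBx⟩ := ihx
    obtain ⟨By, hBy⟩ := ihy
    refine ⟨Bx ∪ By ∪ Finset.image (fun p => p.1 * p.2⁻¹)
      ((rF S x).support ×ˢ (sig (rG S x) (rF S y)).support), fun χ γ hB hγ1 => ?_⟩
    have hBx' : ∀ b ∈ Bx, γ b = 0 := fun b hb =>
      hB b (Finset.mem_union_left _ (Finset.mem_union_left _ hb))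
    have hBy' : ∀ b ∈ By, γ b = 0 := fun b hb =>
      hB b (Finset.mem_union_left _ (Finset.mem_union_right _ hb))
    rw [map_mul, map_mul, K.mul_z, K.mul_z]
    rw [hBx χ γ hBx' hγ1, hBy χ γ hBy' hγ1, xi_f', xi_g', xi_f', xi_f', xi_g',
      bform_vanish χ γ _ _ ?_, bform_gamma_zero]
    intro a ha b hb
    exact hB _ (Finset.mem_union_right _ (Finset.mem_image.2
      ⟨(a, b), Finset.mem_product.2 ⟨ha, hb⟩, rfl⟩))

/-- evaluation onto `G` -/
noncomputable def p0 : FreeGroup {a : G // a ∈ S} →* G :=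
  FreeGroup.lift Subtype.val

/-- inclusion of words in the `G`-generators -/
def iota : FreeGroup {a : G // a ∈ S} →* FreeGroup (X S) :=
  FreeGroup.map some

lemma rho_iota (v : FreeGroup {a : G // a ∈ S}) :
    rho S (iota S v) = winr (p0 S v) := by
  have h : (rho S).comp (iota S) = (winr : G →* WreathZ G).comp (p0 S) := by
    apply FreeGroup.ext_hom
    intro a
    simp [iota, FreeGroup.map.of, p0, rho]
  exact DFunLike.congr_fun h v

lemma xi_iota (χ : G →* ℤˣ) (γ : G → ℤ) (v : FreeGroup {a : G // a ∈ S}) :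
    xi S χ γ (iota S v) = K.inr (p0 S v) := by
  have h : (xi S χ γ).comp (iota S) = (K.inr : G →* K G χ γ).comp (p0 S) := by
    apply FreeGroup.ext_hom
    intro a
    simp [iota, FreeGroup.map.of, p0, xi]
  exact DFunLike.congr_fun h v

lemma p0_surj (hS : Subgroup.closure (↑S : Set G) = ⊤) : Function.Surjective (p0 S) := by
  rw [← MonoidHom.range_eq_top]
  rw [p0, FreeGroup.range_lift_eq_closure]
  rw [Subtype.range_coe]
  exact hS

lemma winr_mem (hS : Subgroup.closure (↑S : Set G) = ⊤) (g : G) :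
    winr g ∈ (rho S).range := by
  obtain ⟨v, hv⟩ := p0_surj S hS g
  exact MonoidHom.mem_range.2 ⟨iota S v, by rw [rho_iota, hv]⟩

lemma winl_single_mem (hS : Subgroup.closure (↑S : Set G) = ⊤) (a : G) (b : ℤ) :
    winl (Multiplicative.ofAdd (Finsupp.single a b)) ∈ (rho S).range := by
  have h1 : winl (Multiplicative.ofAdd (Finsupp.single (1:G) b)) ∈ (rho S).range := by
    have : winl (Multiplicative.ofAdd (Finsupp.single (1:G) b))
        = (rho S (FreeGroup.of (none : X S))) ^ b := by
      rw [rho_none, ← map_zpow]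
      congr 1
      rw [← ofAdd_zsmul]
      congr 1
      rw [Finsupp.smul_single]
      norm_num
    rw [this]
    exact zpow_mem (MonoidHom.mem_range.2 ⟨FreeGroup.of none, rfl⟩) b
  have h2 : winl (Multiplicative.ofAdd (Finsupp.single a b))
      = winr a⁻¹ * winl (Multiplicative.ofAdd (Finsupp.single (1:G) b)) * winr a := by
    have := SemidirectProduct.inl_aut (φ := wreathAction G) a⁻¹
      (Multiplicative.ofAdd (Finsupp.single (1:G) b))
    rw [inv_inv] at this
    have harg : wreathAction G a⁻¹ (Multiplicative.ofAdd (Finsupp.single (1:G) b))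
        = Multiplicative.ofAdd (Finsupp.single a b) := by
      show Multiplicative.ofAdd (sig a⁻¹ (Finsupp.single (1:G) b)) = _
      rw [sig_single]
      norm_num
    rw [harg] at this
    exact this
  rw [h2]
  exact mul_mem (mul_mem (winr_mem S hS a⁻¹) h1) (winr_mem S hS a)

lemma winl_mem (hS : Subgroup.closure (↑S : Set G) = ⊤) (m : Multiplicative (G →₀ ℤ)) :
    winl m ∈ (rho S).range := by
  have : ∀ f : G →₀ ℤ, winl (Multiplicative.ofAdd f) ∈ (rho S).range := by
    intro f
    induction f using Finsupp.induction_linear with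
    | zero =>
      have : winl (Multiplicative.ofAdd (0 : G →₀ ℤ)) = (1 : WreathZ G) := map_one winl
      rw [this]; exact one_mem _
    | add p q hp hq =>
      have : winl (Multiplicative.ofAdd (p + q))
          = winl (Multiplicative.ofAdd p) * winl (Multiplicative.ofAdd q) := by
        rw [← map_mul]; rfl
      rw [this]; exact mul_mem hp hq
    | single a b => exact winl_single_mem S hS a b
  simpa using this (Multiplicative.toAdd m)

lemma rho_surj (hS : Subgroup.closure (↑S : Set G) = ⊤) :
    Function.Surjective (rho S) := by
  rw [← MonoidHom.range_eq_top, Subgroup.eq_top_iff']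
  intro x
  have hx : x = winl (SemidirectProduct.left
        (x : Multiplicative (G →₀ ℤ) ⋊[wreathAction G] G))
      * winr (SemidirectProduct.right
        (x : Multiplicative (G →₀ ℤ) ⋊[wreathAction G] G)) :=
    (SemidirectProduct.inl_left_mul_inr_right _).symm
  rw [hx]
  exact mul_mem (winl_mem S hS _) (winr_mem S hS _)

lemma womega_rho (χ : G →* ℤˣ) :
    (womega χ).comp (rho S) = xi S χ (fun _ => 0) := by
  apply FreeGroup.ext_hom
  intro a
  match a with
  | none =>
    simp only [MonoidHom.comp_apply, rho_none, xi_none]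
    rfl
  | some i =>
    simp only [MonoidHom.comp_apply, rho_some, xi_some]
    rfl

lemma xi_ker_of (χ : G →* ℤˣ) (γ : G → ℤ) (t : FreeGroup (X S))
    (hρ1 : rho S t = 1) (hz : (xi S χ γ t).z = (xi S χ (fun _ => 0) t).z) :
    xi S χ γ t = 1 := by
  have hω := DFunLike.congr_fun (womega_rho S χ) t
  simp only [MonoidHom.comp_apply, hρ1, map_one] at hω
  refine K.ext ?_ ?_ ?_
  · rw [xi_f' S χ γ t, ← xi_f' S χ (fun _ => 0) t, ← hω]
    rfl
  · rw [hz, ← hω]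
    rfl
  · rw [xi_g' S χ γ t, ← xi_g' S χ (fun _ => 0) t, ← hω]
    rfl

lemma xi_witness (χ : G →* ℤˣ) (γ : G → ℤ) (hγ1 : γ 1 = 0) (tt : G)
    (v : FreeGroup {a : G // a ∈ S}) (hv : p0 S v = tt) :
    (xi S χ γ ⁅iota S v * FreeGroup.of (none : X S) * (iota S v)⁻¹,
      FreeGroup.of (none : X S)⁆).z = γ tt⁻¹ - (χ tt : ℤ) * γ tt := by
  have h1 : xi S χ γ (iota S v * FreeGroup.of (none : X S) * (iota S v)⁻¹)
      = (⟨Finsupp.single tt⁻¹ 1, 0, 1⟩ : K G χ γ) := by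
    rw [map_mul, map_mul, map_inv, xi_iota, hv, xi_none]
    refine K.ext ?_ ?_ ?_
    · simp [sig_single, bform_zero_left, bform_zero_right]
    · simp [sig_single, bform_zero_left, bform_zero_right]
    · simp
  rw [map_commutatorElement, h1, xi_none, commutatorElement_def]
  simp only [K.mul_z, K.mul_f, K.mul_g, K.inv_z, K.inv_f, K.inv_g,
    sig_one, inv_one, mul_one, one_mul, sig_single, sig_zero,
    bform_single_single, bform_add_left, bform_neg_right, bform_neg_left,
    bform_zero_left, bform_zero_right, map_one, inv_inv, hγ1, chi_inv,
    Units.val_one]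
  push_cast
  ring

lemma rho_witness (tt : G) (v : FreeGroup {a : G // a ∈ S}) (hv : p0 S v = tt) :
    rho S ⁅iota S v * FreeGroup.of (none : X S) * (iota S v)⁻¹,
      FreeGroup.of (none : X S)⁆ = 1 := by
  rw [map_commutatorElement, commutatorElement_eq_one_iff_mul_comm]
  rw [map_mul, map_mul, map_inv, rho_iota, hv, rho_none]
  have haut := SemidirectProduct.inl_aut (φ := wreathAction G) tt
    (Multiplicative.ofAdd (Finsupp.single (1:G) 1))
  have h2 : winr tt * winl (Multiplicative.ofAdd (Finsupp.single (1:G) 1)) * (winr tt)⁻¹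
      = winl (wreathAction G tt (Multiplicative.ofAdd (Finsupp.single (1:G) 1))) := by
    rw [show (winr tt)⁻¹ = winr tt⁻¹ from (map_inv winr tt).symm]
    exact haut.symm
  rw [h2, ← map_mul, ← map_mul, mul_comm]

end Generators

lemma invariance {A : Type*} [Group A] (hA : Group.IsFinitelyPresented' A)
    {Y : Type*} [Finite Y] (ρ : FreeGroup Y →* A) (hρ : Function.Surjective ρ) :
    ∃ T : Set (FreeGroup Y), T.Finite ∧ T ⊆ (ρ.ker : Set (FreeGroup Y)) ∧
      Subgroup.normalClosure T = ρ.ker := by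
  classical
  obtain ⟨n, π, hπ, s, hs⟩ := hA
  choose u hu using fun i : Fin n => hρ (π (FreeGroup.of i))
  choose v hv using fun y : Y => hπ (ρ (FreeGroup.of y))
  let φ : FreeGroup (Fin n) →* FreeGroup Y := FreeGroup.lift u
  let ψ : FreeGroup Y →* FreeGroup (Fin n) := FreeGroup.lift v
  have hφ : ρ.comp φ = π := FreeGroup.ext_hom _ _ (fun i => by simp [φ, hu])
  have hψ : π.comp ψ = ρ := FreeGroup.ext_hom _ _ (fun y => by simp [ψ, hv])
  have hφ' : ∀ w, ρ (φ w) = π w := fun w => DFunLike.congr_fun hφ w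
  have hψ' : ∀ w, π (ψ w) = ρ w := fun w => DFunLike.congr_fun hψ w
  refine ⟨(φ '' ↑s) ∪
    (Set.range fun y : Y => FreeGroup.of y * (φ (ψ (FreeGroup.of y)))⁻¹), ?_, ?_, ?_⟩
  · exact (s.finite_toSet.image φ).union (Set.finite_range _)
  · rintro t (⟨r, hr, rfl⟩ | ⟨y, rfl⟩)
    · have hr1 : π r = 1 := by
        have : r ∈ π.ker := hs ▸ Subgroup.subset_normalClosure hr
        exact this
      show φ r ∈ ρ.ker
      rw [MonoidHom.mem_ker, hφ', hr1]
    · show _ ∈ ρ.ker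
      rw [MonoidHom.mem_ker, map_mul, map_inv, hφ', hψ', mul_inv_cancel]
  · set T : Set (FreeGroup Y) := (φ '' ↑s) ∪
      (Set.range fun y : Y => FreeGroup.of y * (φ (ψ (FreeGroup.of y)))⁻¹) with hT
    set N := Subgroup.normalClosure T with hN
    have hTN : T ⊆ (N : Set _) := Subgroup.subset_normalClosure
    -- first inclusion : N ≤ ker ρ
    have h1 : N ≤ ρ.ker := by
      apply Subgroup.normalClosure_le_normal
      rintro t (⟨r, hr, rfl⟩ | ⟨y, rfl⟩)
      · have hr1 : π r = 1 := by
          have : r ∈ π.ker := hs ▸ Subgroup.subset_normalClosure hr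
          exact this
        show φ r ∈ ρ.ker
        rw [MonoidHom.mem_ker, hφ', hr1]
      · show _ ∈ ρ.ker
        rw [MonoidHom.mem_ker, map_mul, map_inv, hφ', hψ', mul_inv_cancel]
    -- second inclusion : ker ρ ≤ N
    have h2 : ρ.ker ≤ N := by
      intro w hw
      have hq : ∀ y : Y, (QuotientGroup.mk' N) (φ (ψ (FreeGroup.of y)))
          = QuotientGroup.mk' N (FreeGroup.of y) := by
        intro y
        have ht : FreeGroup.of y * (φ (ψ (FreeGroup.of y)))⁻¹ ∈ N :=
          hTN (Or.inr ⟨y, rfl⟩)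
        rw [QuotientGroup.mk'_eq_mk']
        refine ⟨(φ (ψ (FreeGroup.of y)))⁻¹ *
          (FreeGroup.of y * (φ (ψ (FreeGroup.of y)))⁻¹) * (φ (ψ (FreeGroup.of y))), ?_, ?_⟩
        · exact (Subgroup.normalClosure_normal).conj_mem' _ ht _
        · group
      have hcomp : (QuotientGroup.mk' N).comp (φ.comp ψ) = QuotientGroup.mk' N :=
        FreeGroup.ext_hom _ _ (fun y => by simpa using hq y)
      have hφψ : φ (ψ w) ∈ N := by
        have hker : ψ w ∈ π.ker := by
          rw [MonoidHom.mem_ker, hψ']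
          exact hw
        rw [← hs] at hker
        have hmap : Subgroup.normalClosure (↑s) ≤ N.comap φ := by
          haveI : (N.comap φ).Normal := Subgroup.Normal.comap Subgroup.normalClosure_normal φ
          apply Subgroup.normalClosure_le_normal
          intro r hr
          exact hTN (Or.inl ⟨r, hr, rfl⟩)
        exact hmap hker
      have : QuotientGroup.mk' N w = 1 := by
        have := DFunLike.congr_fun hcomp w
        simp only [MonoidHom.comp_apply] at this
        rw [← this]
        exact (QuotientGroup.eq_one_iff _).2 hφψ
      exact (QuotientGroup.eq_one_iff w).1 this
    exact le_antisymm h1 h2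

section ExpTwo

/-- a group in which all elements off a finite set are involutions has exponent two. -/
lemma sq_eq_one_of_cofinite [Infinite G] (D : Set G) (hD : D.Finite)
    (h : ∀ x : G, x ∉ D → x * x = 1) (x : G) : x * x = 1 := by
  classical
  -- pick y avoiding finitely many constraints
  have hfin1 : (D ∪ (fun y => x * y) ⁻¹' D).Finite :=
    hD.union (hD.preimage (mul_right_injective x).injOn)
  obtain ⟨y, hy⟩ := hfin1.infinite_compl.nonempty
  rw [Set.mem_compl_iff, Set.mem_union, not_or] at hy
  obtain ⟨hyD, hxyD⟩ := hy
  have hfin2 : (D ∪ (fun z => x * z) ⁻¹' D ∪ (fun z => y * z) ⁻¹' D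
      ∪ (fun z => x * y * z) ⁻¹' D).Finite :=
    ((hfin1.union (hD.preimage (mul_right_injective y).injOn)).union
      (hD.preimage (mul_right_injective (x * y)).injOn))
  obtain ⟨y', hy'⟩ := hfin2.infinite_compl.nonempty
  rw [Set.mem_compl_iff, Set.mem_union, Set.mem_union, Set.mem_union, not_or, not_or,
    not_or] at hy'
  obtain ⟨⟨⟨hy'D, hxy'D⟩, hyy'D⟩, hxyy'D⟩ := hy'
  -- basic relations
  have inv_self : ∀ a : G, a ∉ D → a⁻¹ = a := fun a ha =>
    inv_eq_of_mul_eq_one_right (h a ha)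
  have key : ∀ a : G, a ∉ D → x * a ∉ D → x * a * x = a := by
    intro a ha hxa
    have h1 : x * a * (x * a) = 1 := h _ hxa
    have h2 : x * a * x = a⁻¹ := by
      have h1' : x * a * x * a = 1 := by
        rw [show x * a * x * a = x * a * (x * a) from by group]
        exact h1
      exact eq_inv_of_mul_eq_one_left h1'
    rw [h2, inv_self a ha]
  have k1 : x * y * x = y := key y hyD (by simpa using hxyD)
  have k2 : x * y' * x = y' := key y' hy'D (by simpa using hxy'D)
  have k3 : x * (y * y') * x = y * y' := key (y * y') (by simpa using hyy'D)
    (by simpa [mul_assoc] using hxyy'D)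
  -- (x y x)(x y' x) = y y'  gives  x y (x x) y' x = x (y y') x
  have h4 : x * y * (x * x) * y' * x = x * (y * y') * x := by
    rw [k3]
    calc x * y * (x * x) * y' * x = (x * y * x) * (x * y' * x) := by group
      _ = y * y' := by rw [k1, k2]
  have h5 : x * (y * ((x * x) * (y' * x))) = x * (y * (y' * x)) := by
    calc x * (y * ((x * x) * (y' * x))) = x * y * (x * x) * y' * x := by group
      _ = x * (y * y') * x := h4
      _ = x * (y * (y' * x)) := by group
  have h6 : (x * x) * (y' * x) = y' * x := by
    have := mul_left_cancel (mul_left_cancel h5)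
    exact this
  have h6' : (x * x) * (y' * x) = 1 * (y' * x) := by rw [one_mul]; exact h6
  exact mul_right_cancel h6'

lemma mul_comm_of_exp_two (h : ∀ x : G, x * x = 1) (a b : G) : a * b = b * a := by
  have hab : a * b = (a * b)⁻¹ := (inv_eq_of_mul_eq_one_right (h (a * b))).symm
  have ha : a⁻¹ = a := inv_eq_of_mul_eq_one_right (h a)
  have hb : b⁻¹ = b := inv_eq_of_mul_eq_one_right (h b)
  rw [hab, mul_inv_rev, ha, hb]

/-- in an exponent-two group every nontrivial element is detected by a `±1`-character. -/
lemma exists_character (h : ∀ x : G, x * x = 1) (t : G) (ht : t ≠ 1) :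
    ∃ χ : G →* ℤˣ, χ t = -1 := by
  classical
  letI cg : CommGroup G := { (inferInstance : Group G) with
    mul_comm := mul_comm_of_exp_two h }
  letI : Module (ZMod 2) (Additive G) := AddCommGroup.zmodModule (by
    intro x
    show (2 : ℕ) • x = 0
    rw [two_nsmul]
    exact h (Additive.toMul x))
  have ht0 : (Additive.ofMul t : Additive G) ≠ 0 := by
    simpa using ht
  obtain ⟨φ, hφ⟩ : ∃ φ : Module.Dual (ZMod 2) (Additive G), φ (Additive.ofMul t) ≠ 0 := by
    by_contra hcon
    push_neg at hcon
    exact ht0 ((Module.forall_dual_apply_eq_zero_iff (ZMod 2) _).1 hcon)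
  have hz2 : ∀ z : ZMod 2, z = 0 ∨ z = 1 := by decide
  refine ⟨{ toFun := fun g => if φ (Additive.ofMul g) = 0 then 1 else -1
            map_one' := by simp
            map_mul' := fun a b => ?_ }, ?_⟩
  · have hadd : φ (Additive.ofMul (a * b))
        = φ (Additive.ofMul a) + φ (Additive.ofMul b) := map_add φ _ _
    rcases hz2 (φ (Additive.ofMul a)) with h1 | h1 <;>
      rcases hz2 (φ (Additive.ofMul b)) with h2 | h2 <;>
        simp [hadd, h1, h2, show (1 : ZMod 2) + 1 = 0 from by decide]
  · simp only [MonoidHom.coe_mk, OneHom.coe_mk]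
    rw [if_neg hφ]

end ExpTwo

end WreathProof

open scoped commutatorElement

theorem wreathZ_fg_not_fp (G : Type*) [Group G] [Infinite G] (hG : Group.FG G) :
    Group.FG (WreathZ G) ∧ ¬ Group.IsFinitelyPresented' (WreathZ G) := by
  classical
  obtain ⟨Sset, hclo, hfin⟩ := Group.fg_iff.1 hG
  set S : Finset G := hfin.toFinset with hSdef
  have hS : Subgroup.closure (↑S : Set G) = ⊤ := by
    rwa [hSdef, Set.Finite.coe_toFinset]
  have hsurj := WreathProof.rho_surj S hS
  constructor
  · -- finite generation
    refine Group.fg_iff.2 ⟨Set.range (fun o : WreathProof.X S =>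
      WreathProof.rho S (FreeGroup.of o)), ?_, Set.finite_range _⟩
    have hfun : (fun o : WreathProof.X S => WreathProof.rho S (FreeGroup.of o))
        = fun o : WreathProof.X S => o.elim
            (WreathProof.winl (Multiplicative.ofAdd (Finsupp.single (1:G) 1)))
            (fun i => WreathProof.winr (i : G)) := by
      funext o
      exact FreeGroup.lift_apply_of
    rw [hfun, ← FreeGroup.range_lift_eq_closure]
    exact MonoidHom.range_eq_top.2 hsurj
  · -- not finitely presented
    intro hFP
    obtain ⟨T, hTfin, hTker, hTclo⟩ := WreathProof.invariance hFP (WreathProof.rho S) hsurj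
    choose Bof hBof using WreathProof.xi_z_finite_dep S
    set B : Finset G := hTfin.toFinset.sup Bof with hB
    set B' : Finset G := (B ∪ B.image (fun x => x⁻¹)) ∪ {1} with hB'
    have hBB' : ∀ x : G, x ∈ B → x ∈ B' := fun x hx =>
      Finset.mem_union_left _ (Finset.mem_union_left _ hx)
    have h1B' : (1 : G) ∈ B' := Finset.mem_union_right _ (Finset.mem_singleton_self 1)
    have main : ∃ (t : G) (χ : G →* ℤˣ) (γ : G → ℤ), γ 1 = 0 ∧ (∀ b ∈ B, γ b = 0) ∧
        γ t⁻¹ - (χ t : ℤ) * γ t ≠ 0 := by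
      by_cases hcase : ∃ t : G, t ∉ B' ∧ t * t ≠ 1
      · obtain ⟨t, htB', ht2⟩ := hcase
        have ht1 : t ≠ 1 := fun h => ht2 (by rw [h, one_mul])
        refine ⟨t, 1, fun x => if x = t⁻¹ then 1 else 0, ?_, ?_, ?_⟩
        · exact if_neg (fun h1 => ht1 (by rw [← inv_inv t, ← h1, inv_one]))
        · intro b hb
          refine if_neg (fun hbt => htB' ?_)
          subst hbt
          exact Finset.mem_union_left _ (Finset.mem_union_right _
            (Finset.mem_image.2 ⟨t⁻¹, hb, inv_inv t⟩))
        · have htne : t ≠ t⁻¹ := by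
            intro h
            refine ht2 ?_
            nth_rewrite 2 [h]
            exact mul_inv_cancel t
          simp [htne]
      · push_neg at hcase
        have hexp : ∀ x : G, x * x = 1 :=
          WreathProof.sq_eq_one_of_cofinite (↑B' : Set G) B'.finite_toSet
            (fun x hx => hcase x (by simpa using hx))
        obtain ⟨t, ht⟩ := B'.finite_toSet.infinite_compl.nonempty
        have htB' : t ∉ B' := by simpa using ht
        have ht1 : t ≠ 1 := fun h => htB' (h ▸ h1B')
        obtain ⟨χ, hχ⟩ := WreathProof.exists_character hexp t ht1
        have htinv : t⁻¹ = t := inv_eq_of_mul_eq_one_right (hexp t)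
        refine ⟨t, χ, fun x => if x = t then 1 else 0, ?_, ?_, ?_⟩
        · exact if_neg (fun h => ht1 h.symm)
        · intro b hb
          refine if_neg (fun hbt : b = t => htB' ?_)
          rw [← hbt]
          exact hBB' b hb
        · rw [htinv, hχ]
          norm_num
    obtain ⟨t, χ, γ, hγ1, hγB, hD⟩ := main
    have hTxi : ∀ t' ∈ T, WreathProof.xi S χ γ t' = 1 := by
      intro t' ht'
      refine WreathProof.xi_ker_of S χ γ t' (hTker ht') ?_
      refine hBof t' χ γ (fun b hb => hγB b ?_) hγ1
      exact Finset.le_sup (f := Bof) (hTfin.mem_toFinset.2 ht') hb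
    have hle : (WreathProof.rho S).ker ≤ (WreathProof.xi S χ γ).ker := by
      rw [← hTclo]
      apply Subgroup.normalClosure_le_normal
      intro a ha
      exact MonoidHom.mem_ker.2 (hTxi a ha)
    obtain ⟨v, hv⟩ := WreathProof.p0_surj S hS t
    have hwker : ⁅WreathProof.iota S v * FreeGroup.of none * (WreathProof.iota S v)⁻¹,
        FreeGroup.of (none : WreathProof.X S)⁆ ∈ (WreathProof.rho S).ker :=
      MonoidHom.mem_ker.2 (WreathProof.rho_witness S t v hv)
    have hw := hle hwker
    rw [MonoidHom.mem_ker] at hw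
    have hz := congrArg WreathProof.K.z hw
    rw [WreathProof.xi_witness S χ γ hγ1 t v hv] at hz
    exact hD (by simpa using hz)
end

section
/- In the Baumslag–Solitar group G = BS(2,3) = ⟨a, b ∣ a⁻¹b²a = b³⟩, the assignment a ↦ a, b ↦ b² extends to a surjective group endomorphism π: G → G, and the commutator [a⁻¹ba, b] is a nontrivial element of ker π; hence G is not Hopfian. -/
/-- The defining relation of the Baumslag–Solitar group `BS(2,3)`:
`a⁻¹ b² a = b³`, i.e. `a⁻¹ b² a (b³)⁻¹ = 1`. -/
def bsRels : Set (FreeGroup (Fin 2)) :=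
  {(FreeGroup.of 0)⁻¹ * (FreeGroup.of 1) ^ 2 * FreeGroup.of 0 * ((FreeGroup.of 1) ^ 3)⁻¹}

/-- The Baumslag–Solitar group `BS(2,3) = ⟨a, b ∣ a⁻¹b²a = b³⟩`. -/
def BS23 := PresentedGroup bsRels

instance : Group BS23 := inferInstanceAs (Group (PresentedGroup bsRels))

/-- The generator `a` of `BS(2,3)`. -/
def BS23.a : BS23 := PresentedGroup.of 0

/-- The generator `b` of `BS(2,3)`. -/
def BS23.b : BS23 := PresentedGroup.of 1

namespace BSAux

noncomputable def g (r : ℝ) : ℝ := if r ≤ 1 then r else (1 + r) / 2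
noncomputable def h (s : ℝ) : ℝ := if s ≤ 1 then s else 2 * s - 1

lemma h_g (r : ℝ) : h (g r) = r := by
  unfold g h; split_ifs <;> linarith

lemma g_h (s : ℝ) : g (h s) = s := by
  unfold g h; split_ifs <;> linarith

lemma g_mem {r : ℝ} (h0 : 0 ≤ r) (h3 : r < 3) : 0 ≤ g r ∧ g r < 2 := by
  unfold g; split_ifs <;> constructor <;> linarith

lemma h_mem {s : ℝ} (h0 : 0 ≤ s) (h2 : s < 2) : 0 ≤ h s ∧ h s < 3 := by
  unfold h; split_ifs <;> constructor <;> linarith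

noncomputable def A (x : ℝ) : ℝ := 2 * ⌊x / 3⌋ + g (x - 3 * ⌊x / 3⌋)
noncomputable def Ainv (y : ℝ) : ℝ := 3 * ⌊y / 2⌋ + h (y - 2 * ⌊y / 2⌋)

lemma frac3 (x : ℝ) : 0 ≤ x - 3 * ⌊x / 3⌋ ∧ x - 3 * ⌊x / 3⌋ < 3 := by
  have h1 : (⌊x / 3⌋ : ℝ) ≤ x / 3 := Int.floor_le _
  have h2 : x / 3 < ⌊x / 3⌋ + 1 := Int.lt_floor_add_one _
  constructor <;> linarith

lemma frac2 (y : ℝ) : 0 ≤ y - 2 * ⌊y / 2⌋ ∧ y - 2 * ⌊y / 2⌋ < 2 := by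
  have h1 : (⌊y / 2⌋ : ℝ) ≤ y / 2 := Int.floor_le _
  have h2 : y / 2 < ⌊y / 2⌋ + 1 := Int.lt_floor_add_one _
  constructor <;> linarith

lemma Ainv_A (x : ℝ) : Ainv (A x) = x := by
  obtain ⟨hr0, hr3⟩ := frac3 x
  obtain ⟨hg0, hg2⟩ := g_mem hr0 hr3
  have hfl : ⌊A x / 2⌋ = ⌊x / 3⌋ := by
    rw [Int.floor_eq_iff]
    constructor
    · unfold A; linarith
    · unfold A; linarith
  unfold Ainv
  rw [hfl]
  have hA : A x - 2 * ⌊x / 3⌋ = g (x - 3 * ⌊x / 3⌋) := by unfold A; ring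
  rw [hA, h_g]
  ring

lemma A_Ainv (y : ℝ) : A (Ainv y) = y := by
  obtain ⟨hs0, hs2⟩ := frac2 y
  obtain ⟨hh0, hh3⟩ := h_mem hs0 hs2
  have hfl : ⌊Ainv y / 3⌋ = ⌊y / 2⌋ := by
    rw [Int.floor_eq_iff]
    constructor
    · unfold Ainv; linarith
    · unfold Ainv; linarith
  unfold A
  rw [hfl]
  have hA : Ainv y - 3 * ⌊y / 2⌋ = h (y - 2 * ⌊y / 2⌋) := by unfold Ainv; ring
  rw [hA, g_h]
  ring

lemma A_add_three (x : ℝ) : A (x + 3) = A x + 2 := by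
  have h1 : (x + 3) / 3 = x / 3 + 1 := by ring
  have h2 : ⌊(x + 3) / 3⌋ = ⌊x / 3⌋ + 1 := by rw [h1, Int.floor_add_one]
  unfold A
  rw [h2]
  have h3 : x + 3 - 3 * ((⌊x / 3⌋ : ℝ) + 1) = x - 3 * ⌊x / 3⌋ := by ring
  push_cast
  rw [h3]
  ring

noncomputable def permA : Equiv.Perm ℝ := ⟨A, Ainv, Ainv_A, A_Ainv⟩
noncomputable def permB : Equiv.Perm ℝ := Equiv.addRight (1 : ℝ)

lemma permA_apply (x : ℝ) : permA x = A x := rfl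
lemma permA_symm_apply (x : ℝ) : permA⁻¹ x = Ainv x := rfl
lemma permB_apply (x : ℝ) : permB x = x + 1 := rfl
lemma permB_symm_apply (x : ℝ) : permB⁻¹ x = x - 1 := rfl

noncomputable def fperm : Fin 2 → Equiv.Perm ℝ := ![permA, permB]

lemma key : permA⁻¹ * permB ^ 2 * permA * (permB ^ 3)⁻¹ = 1 := by
  ext x
  simp only [Equiv.Perm.mul_apply, Equiv.Perm.one_apply]
  have h3 : (permB ^ 3)⁻¹ x = x - 3 := by
    simp [pow_succ, permB, Equiv.Perm.mul_apply]; ring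
  rw [h3]
  have h2 : ∀ y, (permB ^ 2) y = y + 2 := by
    intro y; simp [pow_succ, permB, Equiv.Perm.mul_apply]; ring
  rw [h2]
  rw [permA_apply, permA_symm_apply, ← A_add_three]
  rw [show x - 3 + 3 = x by ring, Ainv_A]

lemma hrelperm : ∀ r ∈ bsRels, FreeGroup.lift fperm r = 1 := by
  intro r hr
  rw [bsRels, Set.mem_singleton_iff] at hr
  subst hr
  simp only [map_mul, map_inv, map_pow, FreeGroup.lift_apply_of]
  show permA⁻¹ * permB ^ 2 * permA * (permB ^ 3)⁻¹ = 1
  exact key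

/-- The permutation representation of `BS23`. -/
noncomputable def ρ : BS23 →* Equiv.Perm ℝ := PresentedGroup.toGroup hrelperm

lemma ρa : ρ BS23.a = permA := PresentedGroup.toGroup.of hrelperm
lemma ρb : ρ BS23.b = permB := PresentedGroup.toGroup.of hrelperm

lemma eA1 : A 1 = 1 := by
  have hf : ⌊(1 : ℝ) / 3⌋ = 0 := by norm_num [Int.floor_eq_iff]
  rw [A, hf]; norm_num [g]

lemma eAinv2 : Ainv 2 = 3 := by
  have hf : ⌊(2 : ℝ) / 2⌋ = 1 := by norm_num [Int.floor_eq_iff]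
  rw [Ainv, hf]; norm_num [h]

lemma eA2 : A 2 = 3 / 2 := by
  have hf : ⌊(2 : ℝ) / 3⌋ = 0 := by norm_num [Int.floor_eq_iff]
  rw [A, hf]; norm_num [g]

lemma eAinvhalf : Ainv (1 / 2) = 1 / 2 := by
  have hf : ⌊(1 : ℝ) / 2 / 2⌋ = 0 := by norm_num [Int.floor_eq_iff]
  rw [Ainv, hf]; norm_num [h]

/-- The commutator is nontrivial in `BS23`. -/
lemma c_ne_one :
    (BS23.a⁻¹ * BS23.b * BS23.a)⁻¹ * BS23.b⁻¹ * (BS23.a⁻¹ * BS23.b * BS23.a) * BS23.b ≠ 1 := by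
  intro hc
  have hρ := congrArg ρ hc
  rw [map_one] at hρ
  simp only [map_mul, map_inv, ρa, ρb] at hρ
  have h0 := congrArg (fun (σ : Equiv.Perm ℝ) => σ 0) hρ
  simp only [Equiv.Perm.mul_apply, Equiv.Perm.one_apply, mul_inv_rev, inv_inv] at h0
  simp only [permA_apply, permA_symm_apply, permB_apply, permB_symm_apply] at h0
  rw [show (0 : ℝ) + 1 = 1 by norm_num, eA1, show (1 : ℝ) + 1 = 2 by norm_num, eAinv2,
    show (3 : ℝ) - 1 = 2 by norm_num, eA2, show (3 : ℝ) / 2 - 1 = 1 / 2 by norm_num,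
    eAinvhalf] at h0
  norm_num at h0

/-- The defining relation holds in `BS23`. -/
lemma brel : BS23.a⁻¹ * BS23.b ^ 2 * BS23.a = BS23.b ^ 3 := by
  have hmk : PresentedGroup.mk bsRels
      ((FreeGroup.of 0)⁻¹ * (FreeGroup.of 1) ^ 2 * FreeGroup.of 0 *
        ((FreeGroup.of 1) ^ 3)⁻¹) = 1 := by
    apply (QuotientGroup.eq_one_iff _).mpr
    exact Subgroup.subset_normalClosure rfl
  rw [← mul_inv_eq_one]
  exact hmk

noncomputable def fπ : Fin 2 → BS23 := ![BS23.a, BS23.b ^ 2]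

lemma hrelπ : ∀ r ∈ bsRels, FreeGroup.lift fπ r = 1 := by
  intro r hr
  rw [bsRels, Set.mem_singleton_iff] at hr
  subst hr
  simp only [map_mul, map_inv, map_pow, FreeGroup.lift_apply_of]
  show BS23.a⁻¹ * (BS23.b ^ 2) ^ 2 * BS23.a * ((BS23.b ^ 2) ^ 3)⁻¹ = 1
  have h46 : BS23.a⁻¹ * BS23.b ^ 4 * BS23.a = BS23.b ^ 6 := by
    calc BS23.a⁻¹ * BS23.b ^ 4 * BS23.a
        = (BS23.a⁻¹ * BS23.b ^ 2 * BS23.a) * (BS23.a⁻¹ * BS23.b ^ 2 * BS23.a) := by group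
      _ = BS23.b ^ 3 * BS23.b ^ 3 := by rw [brel]
      _ = BS23.b ^ 6 := by group
  calc BS23.a⁻¹ * (BS23.b ^ 2) ^ 2 * BS23.a * ((BS23.b ^ 2) ^ 3)⁻¹
      = (BS23.a⁻¹ * BS23.b ^ 4 * BS23.a) * (BS23.b ^ 6)⁻¹ := by group
    _ = BS23.b ^ 6 * (BS23.b ^ 6)⁻¹ := by rw [h46]
    _ = 1 := by group

/-- The non-injective surjective endomorphism. -/
noncomputable def π : BS23 →* BS23 := PresentedGroup.toGroup hrelπ

lemma πa : π BS23.a = BS23.a := PresentedGroup.toGroup.of hrelπ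
lemma πb : π BS23.b = BS23.b ^ 2 := PresentedGroup.toGroup.of hrelπ

lemma π_surj : Function.Surjective π := by
  have ha : BS23.a ∈ π.range := ⟨BS23.a, πa⟩
  have hb : BS23.b ∈ π.range := by
    refine ⟨BS23.a⁻¹ * BS23.b * BS23.a * BS23.b⁻¹, ?_⟩
    simp only [map_mul, map_inv, πa, πb]
    rw [brel]
    group
  intro y
  have hy : y ∈ π.range := by
    refine PresentedGroup.generated_by bsRels π.range ?_ y
    intro j
    fin_cases j
    · exact ha
    · exact hb
  exact hy

lemma πc : π ((BS23.a⁻¹ * BS23.b * BS23.a)⁻¹ * BS23.b⁻¹ * (BS23.a⁻¹ * BS23.b * BS23.a) * BS23.b)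
    = 1 := by
  simp only [map_mul, map_inv, πa, πb]
  rw [brel]
  group

end BSAux

theorem bs23_not_hopfian :
    ∃ π : BS23 →* BS23, π BS23.a = BS23.a ∧ π BS23.b = BS23.b ^ 2 ∧
      Function.Surjective π ∧
      (BS23.a⁻¹ * BS23.b * BS23.a)⁻¹ * BS23.b⁻¹ * (BS23.a⁻¹ * BS23.b * BS23.a) * BS23.b ≠ 1 ∧
      π ((BS23.a⁻¹ * BS23.b * BS23.a)⁻¹ * BS23.b⁻¹ * (BS23.a⁻¹ * BS23.b * BS23.a) * BS23.b)
        = 1 ∧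
      ¬ Function.Injective π := by
  refine ⟨BSAux.π, BSAux.πa, BSAux.πb, BSAux.π_surj, BSAux.c_ne_one, BSAux.πc, ?_⟩
  intro hinj
  exact BSAux.c_ne_one (hinj (by rw [BSAux.πc, map_one]))
end
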